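/- arXiv:2604.08041 — 4 statements merged into one kernel-verified Lean document; each statement's English description precedes it below -/
import Mathlib

section
/- Let 0 < β ≤ 1, T > 0, a ≥ 0, b ≥ 0, and let g_0, g_1, ..., g_n : [0,T] → ℝ be continuous functions satisfying g_i(t) ≤ a + b·(I^β g_{i-1})(t) for every i = 1, ..., n and all t ∈ [0,T]. Then for all t ∈ [0,T] one has g_n(t) ≤ a·∑_{i=0}^{n-1} b^i t^{iβ}/Γ(iβ+1) + b^n·(I^{nβ} g_0)(t). -/
open MeasureTheory intervalIntegral

/-- The Riemann–Liouville fractional integral of order `β` of `g`: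
`(I^β g)(t) = (1/Γ(β)) ∫₀ᵗ (t-ξ)^{β-1} g(ξ) dξ`. -/
noncomputable def rlInt (β : ℝ) (g : ℝ → ℝ) (t : ℝ) : ℝ :=
  (1 / Real.Gamma β) * ∫ ξ in (0:ℝ)..t, (t - ξ) ^ (β - 1) * g ξ

lemma betaReal {β γ : ℝ} (hβ : 0 < β) (hγ : 0 < γ) :
    ∫ u in (0:ℝ)..1, u ^ (β - 1) * (1 - u) ^ (γ - 1)
      = Real.Gamma β * Real.Gamma γ / Real.Gamma (β + γ) := by
  have hc : Complex.Gamma β * Complex.Gamma γ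
      = Complex.Gamma (β + γ) * Complex.betaIntegral β γ :=
    Complex.Gamma_mul_Gamma_eq_betaIntegral (by simpa using hβ) (by simpa using hγ)
  have hB : Complex.betaIntegral β γ
      = ((∫ u in (0:ℝ)..1, u ^ (β - 1) * (1 - u) ^ (γ - 1) : ℝ) : ℂ) := by
    rw [Complex.betaIntegral, ← intervalIntegral.integral_ofReal]
    refine intervalIntegral.integral_congr fun x hx => ?_
    rw [Set.uIcc_of_le (by norm_num : (0:ℝ) ≤ 1)] at hx
    rw [Complex.ofReal_mul, Complex.ofReal_cpow hx.1 (β - 1),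
      Complex.ofReal_cpow (by linarith [hx.2] : (0:ℝ) ≤ 1 - x) (γ - 1)]
    push_cast; ring
  have hne : Real.Gamma (β + γ) ≠ 0 := (Real.Gamma_pos_of_pos (by linarith)).ne'
  have := hc
  rw [hB, ← Complex.ofReal_add, Complex.Gamma_ofReal, Complex.Gamma_ofReal,
    Complex.Gamma_ofReal, ← Complex.ofReal_mul, ← Complex.ofReal_mul] at this
  have h2 : Real.Gamma β * Real.Gamma γ
      = Real.Gamma (β + γ) * ∫ u in (0:ℝ)..1, u ^ (β - 1) * (1 - u) ^ (γ - 1) :=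
    mod_cast this
  field_simp [h2]
  rw [h2]; ring

lemma kernelInt {γ : ℝ} (t : ℝ) (hγ : 0 < γ) :
    IntervalIntegrable (fun ξ => (t - ξ) ^ (γ - 1)) volume 0 t := by
  have h := ((intervalIntegrable_rpow' (a := 0) (b := t)
    (by linarith : (-1:ℝ) < γ - 1)).comp_sub_left t).symm
  simpa using h

lemma kernelInt_mul_meas {γ t C : ℝ} (hγ : 0 < γ) (ht : 0 ≤ t) {w : ℝ → ℝ}
    (hw : AEStronglyMeasurable w (volume.restrict (Set.Ioc 0 t)))
    (hC : ∀ s ∈ Set.Ioc (0:ℝ) t, |w s| ≤ C) :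
    IntervalIntegrable (fun ξ => (t - ξ) ^ (γ - 1) * w ξ) volume 0 t := by
  rw [intervalIntegrable_iff_integrableOn_Ioc_of_le ht]
  have hker : IntegrableOn (fun ξ => (t - ξ) ^ (γ - 1) * C) (Set.Ioc 0 t) volume := by
    have := (kernelInt t hγ).mul_const C
    rwa [intervalIntegrable_iff_integrableOn_Ioc_of_le ht] at this
  refine hker.mono' ?_ ?_
  · exact ((((measurable_const.sub measurable_id).pow measurable_const)).aestronglyMeasurable).mul hw
  · filter_upwards [ae_restrict_mem measurableSet_Ioc] with ξ hξ
    have h1 : (0:ℝ) ≤ (t - ξ) ^ (γ - 1) := Real.rpow_nonneg (by linarith [hξ.2]) _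
    rw [Real.norm_eq_abs, abs_mul, abs_of_nonneg h1]
    exact mul_le_mul_of_nonneg_left (hC ξ hξ) h1

lemma rlInt_const {γ t : ℝ} (c : ℝ) (hγ : 0 < γ) (ht : 0 ≤ t) :
    rlInt γ (fun _ => c) t = c * t ^ γ / Real.Gamma (γ + 1) := by
  have hΓ : Real.Gamma γ ≠ 0 := (Real.Gamma_pos_of_pos hγ).ne'
  have h1 : (∫ ξ in (0:ℝ)..t, (t - ξ) ^ (γ - 1)) = t ^ γ / γ := by
    rw [intervalIntegral.integral_comp_sub_left (fun x => x ^ (γ - 1)) t, sub_self, sub_zero,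
      integral_rpow (Or.inl (by linarith))]
    rw [Real.zero_rpow (by linarith : γ - 1 + 1 ≠ 0)]
    ring_nf
  unfold rlInt
  rw [intervalIntegral.integral_mul_const, h1, Real.Gamma_add_one hγ.ne']
  field_simp

lemma rlInt_mono {γ t : ℝ} (hγ : 0 < γ) {f h : ℝ → ℝ}
    (hfi : IntervalIntegrable (fun ξ => (t - ξ) ^ (γ - 1) * f ξ) volume 0 t)
    (hhi : IntervalIntegrable (fun ξ => (t - ξ) ^ (γ - 1) * h ξ) volume 0 t)
    (ht : 0 ≤ t) (hle : ∀ ξ ∈ Set.Icc (0:ℝ) t, f ξ ≤ h ξ) :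
    rlInt γ f t ≤ rlInt γ h t := by
  unfold rlInt
  have hΓ : (0:ℝ) ≤ 1 / Real.Gamma γ := by positivity
  refine mul_le_mul_of_nonneg_left ?_ hΓ
  refine intervalIntegral.integral_mono_on ht hfi hhi fun ξ hξ => ?_
  exact mul_le_mul_of_nonneg_left (hle ξ hξ)
    (Real.rpow_nonneg (by linarith [hξ.2]) _)

lemma kernel_integral {γ t : ℝ} (hγ : 0 < γ) (ht : 0 ≤ t) :
    (∫ ξ in (0:ℝ)..t, (t - ξ) ^ (γ - 1)) = t ^ γ / γ := by
  rw [intervalIntegral.integral_comp_sub_left (fun x => x ^ (γ - 1)) t, sub_self, sub_zero,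
    integral_rpow (Or.inl (by linarith))]
  rw [Real.zero_rpow (by linarith : γ - 1 + 1 ≠ 0)]
  ring_nf

lemma rlInt_affine {γ t a b : ℝ} (hγ : 0 < γ) (ht : 0 ≤ t) {w : ℝ → ℝ}
    (hwi : IntervalIntegrable (fun ξ => (t - ξ) ^ (γ - 1) * w ξ) volume 0 t) :
    rlInt γ (fun s => a + b * w s) t
      = a * t ^ γ / Real.Gamma (γ + 1) + b * rlInt γ w t := by
  have hΓ : Real.Gamma γ ≠ 0 := (Real.Gamma_pos_of_pos hγ).ne'
  unfold rlInt
  have heq : (fun ξ => (t - ξ) ^ (γ - 1) * (a + b * w ξ))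
      = fun ξ => ((t - ξ) ^ (γ - 1) * a) + b * ((t - ξ) ^ (γ - 1) * w ξ) := by
    funext ξ; ring
  rw [heq, intervalIntegral.integral_add ((kernelInt t hγ).mul_const a) (hwi.const_mul b),
    intervalIntegral.integral_mul_const, intervalIntegral.integral_const_mul,
    kernel_integral hγ ht, Real.Gamma_add_one hγ.ne']
  field_simp

lemma rlInt_abs_bound {β t M : ℝ} (hβ : 0 < β) (ht : 0 ≤ t) {h : ℝ → ℝ}
    (hi : IntervalIntegrable (fun ξ => (t - ξ) ^ (β - 1) * h ξ) volume 0 t)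
    (hM : ∀ ξ ∈ Set.Icc (0:ℝ) t, |h ξ| ≤ M) :
    |rlInt β h t| ≤ M * t ^ β / (β * Real.Gamma β) := by
  have hΓ : 0 < Real.Gamma β := Real.Gamma_pos_of_pos hβ
  have h1 : |∫ ξ in (0:ℝ)..t, (t - ξ) ^ (β - 1) * h ξ|
      ≤ ∫ ξ in (0:ℝ)..t, |(t - ξ) ^ (β - 1) * h ξ| :=
    intervalIntegral.abs_integral_le_integral_abs ht
  have h2 : (∫ ξ in (0:ℝ)..t, |(t - ξ) ^ (β - 1) * h ξ|)
      ≤ ∫ ξ in (0:ℝ)..t, (t - ξ) ^ (β - 1) * M := by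
    refine intervalIntegral.integral_mono_on ht hi.abs ((kernelInt t hβ).mul_const M)
      fun ξ hξ => ?_
    have hk : (0:ℝ) ≤ (t - ξ) ^ (β - 1) := Real.rpow_nonneg (by linarith [hξ.2]) _
    rw [abs_mul, abs_of_nonneg hk]
    exact mul_le_mul_of_nonneg_left (hM ξ hξ) hk
  have h3 : (∫ ξ in (0:ℝ)..t, (t - ξ) ^ (β - 1) * M) = t ^ β / β * M := by
    rw [intervalIntegral.integral_mul_const, kernel_integral hβ ht]
  unfold rlInt
  rw [abs_mul, abs_of_nonneg (by positivity : (0:ℝ) ≤ 1 / Real.Gamma β)]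
  calc 1 / Real.Gamma β * |∫ ξ in (0:ℝ)..t, (t - ξ) ^ (β - 1) * h ξ|
      ≤ 1 / Real.Gamma β * (t ^ β / β * M) := by
        refine mul_le_mul_of_nonneg_left (le_trans h1 (le_trans h2 (le_of_eq h3))) (by positivity)
    _ = M * t ^ β / (β * Real.Gamma β) := by field_simp

lemma rlInt_meas {β : ℝ} {h : ℝ → ℝ} (hm : Measurable h) :
    ∃ G : ℝ → ℝ, Measurable G ∧ ∀ s, 0 ≤ s → rlInt β h s = G s := by
  set F : ℝ × ℝ → ℝ :=
    Set.indicator {q : ℝ × ℝ | q.2 ∈ Set.Ioc 0 q.1}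
      (fun q => (q.1 - q.2) ^ (β - 1) * h q.2) with hF
  have hS : MeasurableSet {q : ℝ × ℝ | q.2 ∈ Set.Ioc 0 q.1} := by
    apply MeasurableSet.inter
    · exact measurableSet_lt measurable_const measurable_snd
    · exact measurableSet_le measurable_snd measurable_fst
  have hFm : StronglyMeasurable F := by
    apply StronglyMeasurable.indicator _ hS
    exact (((measurable_fst.sub measurable_snd).pow measurable_const).mul
      (hm.comp measurable_snd)).stronglyMeasurable
  refine ⟨fun s => (1 / Real.Gamma β) * ∫ ξ, F (s, ξ), ?_, ?_⟩
  · exact measurable_const.mul hFm.integral_prod_right'.measurable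
  · intro s hs
    unfold rlInt
    congr 1
    rw [intervalIntegral.integral_of_le hs, ← MeasureTheory.integral_indicator measurableSet_Ioc]
    congr 1

lemma inner_kernel {β γ ξ t : ℝ} (hβ : 0 < β) (hγ : 0 < γ) (hξt : ξ < t) :
    (∫ s in ξ..t, (t - s) ^ (γ - 1) * (s - ξ) ^ (β - 1))
      = (t - ξ) ^ (γ + β - 1) *
        ∫ u in (0:ℝ)..1, u ^ (β - 1) * (1 - u) ^ (γ - 1) := by
  have h0 : 0 < t - ξ := by linarith
  have hcmp := intervalIntegral.integral_comp_mul_add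
    (a := 0) (b := 1) (fun s => (t - s) ^ (γ - 1) * (s - ξ) ^ (β - 1)) h0.ne' ξ
  rw [mul_zero, zero_add, mul_one, sub_add_cancel] at hcmp
  have hcong : (∫ x in (0:ℝ)..1,
        (t - ((t - ξ) * x + ξ)) ^ (γ - 1) * ((t - ξ) * x + ξ - ξ) ^ (β - 1))
      = ((t - ξ) ^ (γ - 1) * (t - ξ) ^ (β - 1)) *
        ∫ u in (0:ℝ)..1, u ^ (β - 1) * (1 - u) ^ (γ - 1) := by
    rw [← intervalIntegral.integral_const_mul]
    refine intervalIntegral.integral_congr fun u hu => ?_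
    rw [Set.uIcc_of_le (by norm_num : (0:ℝ) ≤ 1)] at hu
    have h1 : t - ((t - ξ) * u + ξ) = (t - ξ) * (1 - u) := by ring
    have h2 : (t - ξ) * u + ξ - ξ = (t - ξ) * u := by ring
    rw [h1, h2, Real.mul_rpow h0.le (by linarith [hu.2]), Real.mul_rpow h0.le hu.1]
    ring
  rw [hcong] at hcmp
  have hI : (∫ s in ξ..t, (t - s) ^ (γ - 1) * (s - ξ) ^ (β - 1))
      = (t - ξ) * ((t - ξ) ^ (γ - 1) * (t - ξ) ^ (β - 1) *
        ∫ u in (0:ℝ)..1, u ^ (β - 1) * (1 - u) ^ (γ - 1)) := by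
    rw [hcmp, smul_eq_mul, ← mul_assoc, mul_inv_cancel₀ h0.ne', one_mul]
  rw [hI, ← mul_assoc, ← mul_assoc]
  congr 1
  rw [show γ + β - 1 = 1 + ((γ - 1) + (β - 1)) by ring, Real.rpow_add h0, Real.rpow_add h0,
    Real.rpow_one, mul_assoc]

lemma rlInt_comp {β γ t : ℝ} (hβ : 0 < β) (hγ : 0 < γ) (ht : 0 ≤ t)
    {h : ℝ → ℝ} (hc : Continuous h) :
    rlInt γ (rlInt β h) t = rlInt (γ + β) h t := by
  have hΓβ : (0:ℝ) < Real.Gamma β := Real.Gamma_pos_of_pos hβ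
  have hΓγ : (0:ℝ) < Real.Gamma γ := Real.Gamma_pos_of_pos hγ
  have hΓγβ : (0:ℝ) < Real.Gamma (γ + β) := Real.Gamma_pos_of_pos (by linarith)
  obtain ⟨M, hM⟩ := isCompact_Icc.exists_bound_of_continuousOn
    (s := Set.Icc (0:ℝ) t) hc.continuousOn
  have hM0 : 0 ≤ M := le_trans (norm_nonneg _) (hM 0 (Set.mem_Icc.mpr ⟨le_refl 0, ht⟩))
  set Beta : ℝ := ∫ u in (0:ℝ)..1, u ^ (β - 1) * (1 - u) ^ (γ - 1) with hBeta
  set S : Set (ℝ × ℝ) := {q | 0 < q.2 ∧ q.2 < q.1 ∧ q.1 < t} with hSdef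
  set f₀ : ℝ × ℝ → ℝ := fun q => (t - q.1) ^ (γ - 1) * ((q.1 - q.2) ^ (β - 1) * h q.2)
    with hf₀
  set K : ℝ × ℝ → ℝ := S.indicator f₀ with hK
  have hS : MeasurableSet S := by
    have h1 : MeasurableSet {q : ℝ × ℝ | 0 < q.2} :=
      measurableSet_lt measurable_const measurable_snd
    have h2 : MeasurableSet {q : ℝ × ℝ | q.2 < q.1} :=
      measurableSet_lt measurable_snd measurable_fst
    have h3 : MeasurableSet {q : ℝ × ℝ | q.1 < t} :=
      measurableSet_lt measurable_fst measurable_const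
    have hSeq : S = {q : ℝ × ℝ | 0 < q.2} ∩ ({q : ℝ × ℝ | q.2 < q.1} ∩ {q : ℝ × ℝ | q.1 < t}) := by
      ext q; simp [hSdef, Set.mem_setOf_eq, and_assoc]
    rw [hSeq]; exact h1.inter (h2.inter h3)
  have hKsm : StronglyMeasurable K := by
    refine StronglyMeasurable.indicator ?_ hS
    exact (((measurable_const.sub measurable_fst).pow measurable_const).mul
      (((measurable_fst.sub measurable_snd).pow measurable_const).mul
        (hc.measurable.comp measurable_snd))).stronglyMeasurable
  -- slices in s
  have hslice : ∀ s ∈ Set.Ioo (0:ℝ) t, (fun ξ => K (s, ξ))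
      = (Set.Ioo (0:ℝ) s).indicator
        (fun ξ => (t - s) ^ (γ - 1) * ((s - ξ) ^ (β - 1) * h ξ)) := by
    intro s hs
    funext ξ
    by_cases hξ : ξ ∈ Set.Ioo (0:ℝ) s
    · rw [Set.indicator_of_mem hξ, hK, Set.indicator_of_mem (show (s, ξ) ∈ S from ⟨hξ.1, hξ.2, hs.2⟩)]
    · rw [Set.indicator_of_notMem hξ, hK, Set.indicator_of_notMem]
      rintro ⟨h1, h2, h3⟩
      exact hξ ⟨h1, h2⟩
  have hslice0 : ∀ s, s ∉ Set.Ioo (0:ℝ) t → (fun ξ => K (s, ξ)) = fun _ => (0:ℝ) := by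
    intro s hs
    funext ξ
    rw [hK, Set.indicator_of_notMem]
    rintro ⟨h1, h2, h3⟩
    exact hs ⟨lt_trans h1 h2, h3⟩
  -- integrability of slices
  have hsliceInt : ∀ s : ℝ, Integrable (fun ξ => K (s, ξ)) volume := by
    intro s
    by_cases hs : s ∈ Set.Ioo (0:ℝ) t
    · rw [hslice s hs]
      rw [integrable_indicator_iff measurableSet_Ioo]
      have h1 : IntervalIntegrable
          (fun ξ => (t - s) ^ (γ - 1) * ((s - ξ) ^ (β - 1) * h ξ)) volume 0 s :=
        ((kernelInt s hβ).mul_continuousOn hc.continuousOn).const_mul _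
      exact ((intervalIntegrable_iff_integrableOn_Ioc_of_le hs.1.le).mp h1).mono_set
        Set.Ioo_subset_Ioc_self
    · rw [hslice0 s hs]
      exact integrable_zero _ _ _
  -- computation of inner kernel set integral
  have hkercalc : ∀ s : ℝ, 0 ≤ s →
      (∫ ξ in Set.Ioo (0:ℝ) s, (s - ξ) ^ (β - 1) * M) = s ^ β / β * M := by
    intro s hs
    rw [← MeasureTheory.integral_Ioc_eq_integral_Ioo,
      ← intervalIntegral.integral_of_le hs, intervalIntegral.integral_mul_const,
      kernel_integral hβ hs]
  -- norm-integral bound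
  set g₀ : ℝ → ℝ := (Set.Ioo (0:ℝ) t).indicator
    (fun s => (t - s) ^ (γ - 1) * (t ^ β / β * M)) with hg₀
  have hg₀int : Integrable g₀ volume := by
    rw [hg₀, integrable_indicator_iff measurableSet_Ioo]
    exact ((intervalIntegrable_iff_integrableOn_Ioc_of_le ht).mp
      ((kernelInt t hγ).mul_const _)).mono_set Set.Ioo_subset_Ioc_self
  have hbound : ∀ s : ℝ, ‖∫ ξ, ‖K (s, ξ)‖‖ ≤ g₀ s := by
    intro s
    by_cases hs : s ∈ Set.Ioo (0:ℝ) t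
    · have hker : (0:ℝ) ≤ (t - s) ^ (γ - 1) := Real.rpow_nonneg (by linarith [hs.2]) _
      have hnn : (0:ℝ) ≤ ∫ ξ, ‖K (s, ξ)‖ := integral_nonneg fun ξ => norm_nonneg _
      rw [Real.norm_eq_abs, abs_of_nonneg hnn, hg₀, Set.indicator_of_mem hs]
      set f₁ : ℝ → ℝ := fun ξ => (t - s) ^ (γ - 1) * ((s - ξ) ^ (β - 1) * h ξ) with hf₁
      have heq1 : (fun ξ => ‖K (s, ξ)‖)
          = (Set.Ioo (0:ℝ) s).indicator (fun ξ => ‖f₁ ξ‖) := by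
        funext ξ
        rw [show K (s, ξ) = (Set.Ioo (0:ℝ) s).indicator f₁ ξ from congrFun (hslice s hs) ξ]
        exact norm_indicator_eq_indicator_norm f₁ ξ
      have hint1 : IntegrableOn (fun ξ => ‖f₁ ξ‖) (Set.Ioo (0:ℝ) s) volume := by
        have := (hslice s hs) ▸ (hsliceInt s)
        exact ((integrable_indicator_iff measurableSet_Ioo).mp this).norm
      have hint2 : IntegrableOn (fun ξ => (t - s) ^ (γ - 1) * ((s - ξ) ^ (β - 1) * M))
          (Set.Ioo (0:ℝ) s) volume := by
        have h1 : IntervalIntegrable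
            (fun ξ => (t - s) ^ (γ - 1) * ((s - ξ) ^ (β - 1) * M)) volume 0 s :=
          ((kernelInt s hβ).mul_const M).const_mul _
        exact ((intervalIntegrable_iff_integrableOn_Ioc_of_le hs.1.le).mp h1).mono_set
          Set.Ioo_subset_Ioc_self
      calc (∫ ξ, ‖K (s, ξ)‖)
          = ∫ ξ in Set.Ioo (0:ℝ) s, ‖f₁ ξ‖ := by
            rw [heq1, MeasureTheory.integral_indicator measurableSet_Ioo]
        _ ≤ ∫ ξ in Set.Ioo (0:ℝ) s, (t - s) ^ (γ - 1) * ((s - ξ) ^ (β - 1) * M) := by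
            refine setIntegral_mono_on hint1 hint2 measurableSet_Ioo fun ξ hξ => ?_
            have hk2 : (0:ℝ) ≤ (s - ξ) ^ (β - 1) :=
              Real.rpow_nonneg (by linarith [hξ.2]) _
            rw [hf₁, norm_mul, norm_mul, Real.norm_eq_abs, Real.norm_eq_abs,
              abs_of_nonneg hker, abs_of_nonneg hk2]
            refine mul_le_mul_of_nonneg_left (mul_le_mul_of_nonneg_left ?_ hk2) hker
            exact hM ξ ⟨hξ.1.le, by linarith [hξ.2, hs.2]⟩
        _ = (t - s) ^ (γ - 1) * (s ^ β / β * M) := by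
            rw [MeasureTheory.integral_const_mul, hkercalc s hs.1.le]
        _ ≤ (t - s) ^ (γ - 1) * (t ^ β / β * M) := by
            have h1 : s ^ β ≤ t ^ β := Real.rpow_le_rpow hs.1.le hs.2.le hβ.le
            gcongr
    · have h0 : ∀ ξ, K (s, ξ) = 0 := fun ξ => congrFun (hslice0 s hs) ξ
      simp [h0, hg₀, Set.indicator_of_notMem hs]
  -- product integrability
  have hKint : Integrable K (volume.prod volume) := by
    refine (integrable_prod_iff hKsm.aestronglyMeasurable).mpr ⟨?_, ?_⟩
    · exact Filter.Eventually.of_forall fun s => hsliceInt s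
    · exact hg₀int.mono' hKsm.norm.integral_prod_right'.aestronglyMeasurable
        (Filter.Eventually.of_forall hbound)
  have hae : ∀ᵐ s : ℝ, s ∉ ({0, t} : Set ℝ) :=
    MeasureTheory.compl_mem_ae_iff.mpr ((Set.toFinite ({0, t} : Set ℝ)).measure_zero volume)
  -- claim 1
  have hLHS : (∫ s in (0:ℝ)..t, (t - s) ^ (γ - 1) * rlInt β h s)
      = (1 / Real.Gamma β) * ∫ s, ∫ ξ, K (s, ξ) := by
    rw [intervalIntegral.integral_of_le ht,
      ← MeasureTheory.integral_indicator measurableSet_Ioc,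
      ← MeasureTheory.integral_const_mul]
    refine MeasureTheory.integral_congr_ae ?_
    filter_upwards [hae] with s hs0
    by_cases hs : s ∈ Set.Ioo (0:ℝ) t
    · have hrl : rlInt β h s
          = (1 / Real.Gamma β) * ∫ ξ in Set.Ioo (0:ℝ) s, (s - ξ) ^ (β - 1) * h ξ := by
        unfold rlInt
        rw [intervalIntegral.integral_of_le hs.1.le,
          MeasureTheory.integral_Ioc_eq_integral_Ioo]
      rw [Set.indicator_of_mem (show s ∈ Set.Ioc (0:ℝ) t from ⟨hs.1, hs.2.le⟩), hrl,
        hslice s hs, MeasureTheory.integral_indicator measurableSet_Ioo,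
        MeasureTheory.integral_const_mul]
      ring
    · have hnot : s ∉ Set.Ioc (0:ℝ) t := by
        intro hmem
        simp only [Set.mem_insert_iff, Set.mem_singleton_iff, not_or] at hs0
        exact hs ⟨hmem.1, lt_of_le_of_ne hmem.2 hs0.2⟩
      have h0 : ∀ ξ, K (s, ξ) = 0 := fun ξ => congrFun (hslice0 s hs) ξ
      rw [Set.indicator_of_notMem hnot]
      simp [h0]
  -- Fubini swap
  have hswap : (∫ s, ∫ ξ, K (s, ξ)) = ∫ ξ, ∫ s, K (s, ξ) :=
    MeasureTheory.integral_integral_swap (f := fun s ξ => K (s, ξ)) hKint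
  -- claim 3
  have hRHS : (∫ ξ, ∫ s, K (s, ξ))
      = Beta * ∫ ξ in (0:ℝ)..t, (t - ξ) ^ (γ + β - 1) * h ξ := by
    rw [intervalIntegral.integral_of_le ht,
      ← MeasureTheory.integral_indicator measurableSet_Ioc,
      ← MeasureTheory.integral_const_mul]
    refine MeasureTheory.integral_congr_ae ?_
    filter_upwards [hae] with ξ hξ0
    by_cases hξ : ξ ∈ Set.Ioo (0:ℝ) t
    · have hsliceξ : (fun s => K (s, ξ)) = (Set.Ioo ξ t).indicator
          (fun s => (t - s) ^ (γ - 1) * ((s - ξ) ^ (β - 1) * h ξ)) := by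
        funext s
        by_cases hsm : s ∈ Set.Ioo ξ t
        · rw [Set.indicator_of_mem hsm, hK,
            Set.indicator_of_mem (show (s, ξ) ∈ S from ⟨hξ.1, hsm.1, hsm.2⟩)]
        · rw [Set.indicator_of_notMem hsm, hK, Set.indicator_of_notMem]
          rintro ⟨h1, h2, h3⟩
          exact hsm ⟨h2, h3⟩
      have hinner : (∫ s in ξ..t, (t - s) ^ (γ - 1) * ((s - ξ) ^ (β - 1) * h ξ))
          = ((t - ξ) ^ (γ + β - 1) * Beta) * h ξ := by
        have : (fun s => (t - s) ^ (γ - 1) * ((s - ξ) ^ (β - 1) * h ξ))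
            = fun s => ((t - s) ^ (γ - 1) * (s - ξ) ^ (β - 1)) * h ξ := by
          funext s; ring
        rw [this, intervalIntegral.integral_mul_const, inner_kernel hβ hγ hξ.2]
      rw [hsliceξ, MeasureTheory.integral_indicator measurableSet_Ioo,
        ← MeasureTheory.integral_Ioc_eq_integral_Ioo,
        ← intervalIntegral.integral_of_le hξ.2.le, hinner,
        Set.indicator_of_mem (show ξ ∈ Set.Ioc (0:ℝ) t from ⟨hξ.1, hξ.2.le⟩)]
      ring
    · have hnot : ξ ∉ Set.Ioc (0:ℝ) t := by
        intro hmem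
        simp only [Set.mem_insert_iff, Set.mem_singleton_iff, not_or] at hξ0
        exact hξ ⟨hmem.1, lt_of_le_of_ne hmem.2 hξ0.2⟩
      have h0 : (fun s => K (s, ξ)) = fun _ => (0:ℝ) := by
        funext s
        rw [hK, Set.indicator_of_notMem]
        rintro ⟨h1, h2, h3⟩
        exact hnot ⟨h1, by linarith⟩
      rw [Set.indicator_of_notMem hnot, h0]
      simp
  -- assembly
  have hBval : Beta = Real.Gamma β * Real.Gamma γ / Real.Gamma (γ + β) := by
    rw [hBeta, betaReal hβ hγ, add_comm β γ]
  have hdef1 : rlInt γ (rlInt β h) t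
      = (1 / Real.Gamma γ) * ∫ s in (0:ℝ)..t, (t - s) ^ (γ - 1) * rlInt β h s := rfl
  have hdef2 : rlInt (γ + β) h t
      = (1 / Real.Gamma (γ + β)) * ∫ ξ in (0:ℝ)..t, (t - ξ) ^ (γ + β - 1) * h ξ := rfl
  rw [hdef1, hdef2, hLHS, hswap, hRHS, hBval]
  field_simp

theorem mainAux (β T a b : ℝ) (hβ0 : 0 < β) (hT : 0 < T)
    (ha : 0 ≤ a) (hb : 0 ≤ b) (n : ℕ) (hn : 1 ≤ n) (G : ℕ → ℝ → ℝ)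
    (hcont : ∀ i ≤ n, Continuous (G i))
    (hrec : ∀ i, 1 ≤ i → i ≤ n → ∀ t ∈ Set.Icc (0:ℝ) T,
      G i t ≤ a + b * rlInt β (G (i - 1)) t) :
    ∀ t ∈ Set.Icc (0:ℝ) T,
      G n t ≤ a * ∑ i ∈ Finset.range n,
          b ^ i * t ^ ((i : ℝ) * β) / Real.Gamma ((i : ℝ) * β + 1)
        + b ^ n * rlInt ((n : ℝ) * β) (G 0) t := by
  suffices H : ∀ k, 1 ≤ k → k ≤ n → ∀ t ∈ Set.Icc (0:ℝ) T,
      G n t ≤ a * ∑ i ∈ Finset.range k,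
          b ^ i * t ^ ((i : ℝ) * β) / Real.Gamma ((i : ℝ) * β + 1)
        + b ^ k * rlInt ((k : ℝ) * β) (G (n - k)) t by
    intro t ht
    simpa using H n hn le_rfl t ht
  intro k hk
  induction k, hk using Nat.le_induction with
  | base =>
    intro h1n t ht
    have h := hrec n hn le_rfl t ht
    simpa [Real.Gamma_one] using h
  | succ k hk ih =>
    intro hk1n t ht
    have hkn : k ≤ n := le_trans (Nat.le_succ k) hk1n
    have ihk := ih hkn t ht
    obtain ⟨ht0, htT⟩ := ht
    have hγ : 0 < (k : ℝ) * β :=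
      mul_pos (by exact_mod_cast hk : (0:ℝ) < (k:ℝ)) hβ0
    have hcG1 : Continuous (G (n - k)) := hcont _ (Nat.sub_le n k)
    have hcG2 : Continuous (G (n - (k + 1))) := hcont _ (Nat.sub_le n (k + 1))
    -- integrability of kernel * G (n-k)
    have hint1 : IntervalIntegrable
        (fun ξ => (t - ξ) ^ ((k : ℝ) * β - 1) * G (n - k) ξ) volume 0 t :=
      (kernelInt t hγ).mul_continuousOn hcG1.continuousOn
    -- measurability and bound of rlInt β (G (n - (k+1)))
    obtain ⟨W, hWm, hWeq⟩ := rlInt_meas (β := β) hcG2.measurable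
    have hw_aesm : AEStronglyMeasurable (rlInt β (G (n - (k + 1))))
        (volume.restrict (Set.Ioc 0 t)) := by
      refine hWm.aestronglyMeasurable.restrict.congr ?_
      filter_upwards [ae_restrict_mem measurableSet_Ioc] with s hs
      exact (hWeq s hs.1.le).symm
    obtain ⟨M, hM⟩ := isCompact_Icc.exists_bound_of_continuousOn
      (s := Set.Icc (0:ℝ) T) hcG2.continuousOn
    have hM0 : 0 ≤ M :=
      le_trans (norm_nonneg _) (hM 0 (Set.mem_Icc.mpr ⟨le_refl 0, hT.le⟩))
    have hwb : ∀ s ∈ Set.Ioc (0:ℝ) t,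
        |rlInt β (G (n - (k + 1))) s| ≤ M * T ^ β / (β * Real.Gamma β) := by
      intro s hs
      have hsub : ∀ ξ ∈ Set.Icc (0:ℝ) s, |G (n - (k + 1)) ξ| ≤ M := fun ξ hξ =>
        hM ξ (Set.mem_Icc.mpr ⟨hξ.1, le_trans hξ.2 (le_trans hs.2 htT)⟩)
      have h1 := rlInt_abs_bound hβ0 hs.1.le
        ((kernelInt s hβ0).mul_continuousOn hcG2.continuousOn) hsub
      refine le_trans h1 ?_
      have h2 : s ^ β ≤ T ^ β :=
        Real.rpow_le_rpow hs.1.le (le_trans hs.2 htT) hβ0.le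
      have hΓ : 0 < Real.Gamma β := Real.Gamma_pos_of_pos hβ0
      gcongr
    have hint2 : IntervalIntegrable
        (fun ξ => (t - ξ) ^ ((k : ℝ) * β - 1) * rlInt β (G (n - (k + 1))) ξ)
        volume 0 t :=
      kernelInt_mul_meas hγ ht0 hw_aesm hwb
    have hint3 : IntervalIntegrable
        (fun ξ => (t - ξ) ^ ((k : ℝ) * β - 1)
          * (a + b * rlInt β (G (n - (k + 1))) ξ)) volume 0 t := by
      have heq : (fun ξ => (t - ξ) ^ ((k : ℝ) * β - 1)
            * (a + b * rlInt β (G (n - (k + 1))) ξ))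
          = fun ξ => ((t - ξ) ^ ((k : ℝ) * β - 1) * a)
            + b * ((t - ξ) ^ ((k : ℝ) * β - 1) * rlInt β (G (n - (k + 1))) ξ) := by
        funext ξ; ring
      rw [heq]
      exact ((kernelInt t hγ).mul_const a).add (hint2.const_mul b)
    -- monotonicity step
    have hmono : rlInt ((k : ℝ) * β) (G (n - k)) t
        ≤ rlInt ((k : ℝ) * β) (fun s => a + b * rlInt β (G (n - (k + 1))) s) t := by
      refine rlInt_mono hγ hint1 hint3 ht0 fun ξ hξ => ?_
      have h := hrec (n - k) (by omega) (Nat.sub_le n k) ξ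
        (Set.mem_Icc.mpr ⟨hξ.1, le_trans hξ.2 htT⟩)
      simpa [Nat.sub_sub] using h
    have haff : rlInt ((k : ℝ) * β) (fun s => a + b * rlInt β (G (n - (k + 1))) s) t
        = a * t ^ ((k : ℝ) * β) / Real.Gamma ((k : ℝ) * β + 1)
          + b * rlInt ((k : ℝ) * β) (rlInt β (G (n - (k + 1)))) t :=
      rlInt_affine hγ ht0 hint2
    have hcomp : rlInt ((k : ℝ) * β) (rlInt β (G (n - (k + 1)))) t
        = rlInt ((k : ℝ) * β + β) (G (n - (k + 1))) t :=
      rlInt_comp hβ0 hγ ht0 hcG2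
    have hcast : ((k + 1 : ℕ) : ℝ) * β = (k : ℝ) * β + β := by push_cast; ring
    calc G n t
        ≤ a * ∑ i ∈ Finset.range k,
            b ^ i * t ^ ((i : ℝ) * β) / Real.Gamma ((i : ℝ) * β + 1)
          + b ^ k * rlInt ((k : ℝ) * β) (G (n - k)) t := ihk
      _ ≤ a * ∑ i ∈ Finset.range k,
            b ^ i * t ^ ((i : ℝ) * β) / Real.Gamma ((i : ℝ) * β + 1)
          + b ^ k * (a * t ^ ((k : ℝ) * β) / Real.Gamma ((k : ℝ) * β + 1)
            + b * rlInt ((k : ℝ) * β + β) (G (n - (k + 1))) t) := by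
          refine add_le_add_right (mul_le_mul_of_nonneg_left ?_ (pow_nonneg hb k)) _
          calc rlInt ((k : ℝ) * β) (G (n - k)) t
              ≤ rlInt ((k : ℝ) * β) (fun s => a + b * rlInt β (G (n - (k + 1))) s) t :=
                hmono
            _ = _ := by rw [haff, hcomp]
      _ = a * ∑ i ∈ Finset.range (k + 1),
            b ^ i * t ^ ((i : ℝ) * β) / Real.Gamma ((i : ℝ) * β + 1)
          + b ^ (k + 1) * rlInt (((k + 1 : ℕ) : ℝ) * β) (G (n - (k + 1))) t := by
          rw [Finset.sum_range_succ, hcast]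
          ring


theorem stmt0 (β T a b : ℝ) (hβ0 : 0 < β) (hβ1 : β ≤ 1) (hT : 0 < T)
    (ha : 0 ≤ a) (hb : 0 ≤ b) (n : ℕ) (hn : 1 ≤ n) (g : ℕ → ℝ → ℝ)
    (hcont : ∀ i ≤ n, ContinuousOn (g i) (Set.Icc 0 T))
    (hrec : ∀ i, 1 ≤ i → i ≤ n → ∀ t ∈ Set.Icc (0:ℝ) T,
      g i t ≤ a + b * rlInt β (g (i - 1)) t) :
    ∀ t ∈ Set.Icc (0:ℝ) T,
      g n t ≤ a * ∑ i ∈ Finset.range n,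
          b ^ i * t ^ ((i : ℝ) * β) / Real.Gamma ((i : ℝ) * β + 1)
        + b ^ n * rlInt ((n : ℝ) * β) (g 0) t := by
  set Gx : ℕ → ℝ → ℝ :=
    fun i => Set.IccExtend hT.le ((Set.Icc (0:ℝ) T).restrict (g i)) with hGx
  have hGg : ∀ i, ∀ x ∈ Set.Icc (0:ℝ) T, Gx i x = g i x := by
    intro i x hx
    show Set.IccExtend hT.le ((Set.Icc (0:ℝ) T).restrict (g i)) x = g i x
    rw [Set.IccExtend_of_mem hT.le _ hx]
    rfl
  have hGc : ∀ i ≤ n, Continuous (Gx i) := fun i hi =>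
    continuous_IccExtend_iff.mpr (hcont i hi).restrict
  have hrlEq : ∀ (γ : ℝ) i, ∀ x ∈ Set.Icc (0:ℝ) T, rlInt γ (Gx i) x = rlInt γ (g i) x := by
    intro γ i x hx
    unfold rlInt
    congr 1
    refine intervalIntegral.integral_congr fun ξ hξ => ?_
    rw [Set.uIcc_of_le hx.1] at hξ
    rw [hGg i ξ (Set.mem_Icc.mpr ⟨hξ.1, le_trans hξ.2 hx.2⟩)]
  have hrec' : ∀ i, 1 ≤ i → i ≤ n → ∀ t ∈ Set.Icc (0:ℝ) T,
      Gx i t ≤ a + b * rlInt β (Gx (i - 1)) t := by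
    intro i h1 hi t ht
    rw [hGg i t ht, hrlEq β (i - 1) t ht]
    exact hrec i h1 hi t ht
  intro t ht
  have H := mainAux β T a b hβ0 hT ha hb n hn Gx hGc hrec' t ht
  rwa [hGg n t ht, hrlEq ((n : ℝ) * β) 0 t ht] at H
end

section
/- For every function v in the Schwartz space S(ℝ) and all integers s ≥ 1 and m ≥ 0, sup_{x∈ℝ} |x^s v^{(m)}(x)|² ≤ 2s ∫_ℝ (1+x²)^s (v^{(m)}(x))² dx + ( ∫_ℝ (1+x²)^s (v^{(m)}(x))² dx · ∫_ℝ (1+x²)^s (v^{(m+1)}(x))² dx )^{1/2}. -/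
open MeasureTheory Real Set Filter Topology

lemma pow_aux1 (x : ℝ) (k : ℕ) : (1 + x ^ 2) ^ k ≤ 2 ^ (2 * k) * (1 + |x| ^ (2 * k)) := by
  have h1 : (1 + x ^ 2) ≤ (1 + |x|) ^ 2 := by nlinarith [abs_nonneg x, sq_abs x]
  have h2 : (1 + x ^ 2) ^ k ≤ (1 + |x|) ^ (2 * k) := by
    calc (1 + x ^ 2) ^ k ≤ ((1 + |x|) ^ 2) ^ k :=
          pow_le_pow_left₀ (by positivity) h1 k
      _ = (1 + |x|) ^ (2 * k) := by rw [← pow_mul, mul_comm]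
  refine h2.trans ?_
  have h3 : 1 + |x| ≤ 2 * max 1 |x| := by
    rcases le_total 1 |x| with h | h
    · rw [max_eq_right h]; linarith
    · rw [max_eq_left h]; linarith
  calc (1 + |x|) ^ (2 * k) ≤ (2 * max 1 |x|) ^ (2 * k) :=
        pow_le_pow_left₀ (by positivity) h3 _
    _ = 2 ^ (2 * k) * (max 1 |x|) ^ (2 * k) := mul_pow _ _ _
    _ ≤ 2 ^ (2 * k) * (1 + |x| ^ (2 * k)) := by
        have hmax : (max 1 |x|) ^ (2 * k) ≤ 1 + |x| ^ (2 * k) := by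
          rcases le_total 1 |x| with h | h
          · rw [max_eq_right h]
            nlinarith [pow_nonneg (abs_nonneg x) (2 * k)]
          · rw [max_eq_left h]
            have h2 : |x| ^ (2 * k) ≤ 1 ^ (2 * k) :=
              pow_le_pow_left₀ (abs_nonneg x) h _
            have := pow_nonneg (abs_nonneg x) (2 * k)
            rw [one_pow]
            linarith
        gcongr

lemma schwartz_sq_bound (f : SchwartzMap ℝ ℝ) (k : ℕ) :
    ∃ C : ℝ, 0 ≤ C ∧ ∀ x : ℝ, (1 + x ^ 2) ^ k * f x ^ 2 ≤ C := by
  obtain ⟨C1, hC1pos, hC1⟩ := f.decay 0 0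
  obtain ⟨C2, hC2pos, hC2⟩ := f.decay (2 * k) 0
  simp only [pow_zero, one_mul, norm_iteratedFDeriv_zero] at hC1 hC2
  refine ⟨2 ^ (2 * k) * (C1 * C1 + C2 * C1), by positivity, fun x => ?_⟩
  have hb1 : ‖f x‖ ≤ C1 := hC1 x
  have hb2 : ‖x‖ ^ (2 * k) * ‖f x‖ ≤ C2 := hC2 x
  have hfx : f x ^ 2 = ‖f x‖ * ‖f x‖ := by
    rw [Real.norm_eq_abs, ← abs_mul, abs_of_nonneg (by nlinarith [sq_nonneg (f x)]), sq]
  have hfn : (0:ℝ) ≤ ‖f x‖ := norm_nonneg _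
  calc (1 + x ^ 2) ^ k * f x ^ 2 ≤ 2 ^ (2 * k) * (1 + |x| ^ (2 * k)) * f x ^ 2 := by
        have := pow_aux1 x k
        nlinarith [sq_nonneg (f x)]
    _ = 2 ^ (2 * k) * (‖f x‖ * ‖f x‖ + (‖x‖ ^ (2 * k) * ‖f x‖) * ‖f x‖) := by
        rw [hfx, Real.norm_eq_abs x]; ring
    _ ≤ 2 ^ (2 * k) * (C1 * C1 + C2 * C1) := by
        gcongr 2 ^ (2 * k) * ?_
        have h1 : ‖f x‖ * ‖f x‖ ≤ C1 * C1 := mul_le_mul hb1 hb1 hfn hC1pos.le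
        have h2 : (‖x‖ ^ (2 * k) * ‖f x‖) * ‖f x‖ ≤ C2 * C1 :=
          mul_le_mul hb2 hb1 hfn hC2pos.le
        linarith

lemma schwartz_sq_integrable (f : SchwartzMap ℝ ℝ) (k : ℕ) :
    Integrable (fun x : ℝ => (1 + x ^ 2) ^ k * f x ^ 2) := by
  obtain ⟨C, hC0, hCb⟩ := schwartz_sq_bound f (k + 1)
  refine Integrable.mono' (integrable_inv_one_add_sq.const_mul C)
    ?_ (ae_of_all _ fun x => ?_)
  · exact (((continuous_const.add (continuous_pow 2)).pow k).mul
      (f.continuous.pow 2)).aestronglyMeasurable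
  · have hx : (0:ℝ) < 1 + x ^ 2 := by positivity
    rw [Real.norm_eq_abs, abs_of_nonneg (by positivity)]
    rw [show C * (1 + x ^ 2)⁻¹ = C / (1 + x ^ 2) by ring, le_div_iff₀ hx]
    calc (1 + x ^ 2) ^ k * f x ^ 2 * (1 + x ^ 2) = (1 + x ^ 2) ^ (k + 1) * f x ^ 2 := by ring
      _ ≤ C := hCb x

lemma my_cs {F G : ℝ → ℝ} (hF : Integrable (fun x => F x ^ 2))
    (hG : Integrable (fun x => G x ^ 2)) (hFG : Integrable (fun x => |F x * G x|)) :
    (∫ x : ℝ, |F x * G x|) ≤ Real.sqrt ((∫ x : ℝ, F x ^ 2) * (∫ x : ℝ, G x ^ 2)) := by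
  set X := ∫ x : ℝ, |F x * G x| with hX
  set I := ∫ x : ℝ, F x ^ 2 with hI
  set J := ∫ x : ℝ, G x ^ 2 with hJ
  have hI0 : 0 ≤ I := integral_nonneg fun x => sq_nonneg _
  have hJ0 : 0 ≤ J := integral_nonneg fun x => sq_nonneg _
  have key : ∀ a : ℝ, 0 < a → X ≤ (I / a + a * J) / 2 := by
    intro a ha
    have hpt : ∀ x : ℝ, |F x * G x| ≤ (F x ^ 2 / a + a * G x ^ 2) / 2 := by
      intro x
      have h1 : |F x * G x| = |F x| * |G x| := abs_mul _ _
      have h2 : F x ^ 2 = |F x| ^ 2 := (sq_abs _).symm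
      have h3 : G x ^ 2 = |G x| ^ 2 := (sq_abs _).symm
      rw [h1, h2, h3, div_add' _ _ _ ha.ne', div_div, le_div_iff₀ (by linarith)]
      nlinarith [sq_nonneg (|F x| - a * |G x|), abs_nonneg (F x), abs_nonneg (G x)]
    calc X ≤ ∫ x : ℝ, (F x ^ 2 / a + a * G x ^ 2) / 2 :=
          integral_mono hFG (((hF.div_const a).add (hG.const_mul a)).div_const 2) hpt
      _ = (I / a + a * J) / 2 := by
          rw [integral_div, integral_add (hF.div_const a) (hG.const_mul a),
            integral_div, integral_const_mul]
  rcases eq_or_lt_of_le hI0 with hIz | hIpos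
  · refine le_trans (le_trans (le_of_forall_pos_le_add fun ε hε => ?_) (le_refl 0))
      (Real.sqrt_nonneg _)
    rcases eq_or_lt_of_le hJ0 with hJz | hJpos
    · have hk := key 1 one_pos
      rw [← hIz, ← hJz] at hk
      norm_num at hk
      linarith
    · have hk := key (2 * ε / J) (by positivity)
      rw [← hIz] at hk
      have : (0 / (2 * ε / J) + 2 * ε / J * J) / 2 = ε := by
        field_simp
        ring
      rw [this] at hk
      linarith
  · rcases eq_or_lt_of_le hJ0 with hJz | hJpos
    · have hs : Real.sqrt (I * J) = 0 := by rw [← hJz, mul_zero, Real.sqrt_zero]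
      rw [hs]
      refine le_of_forall_pos_le_add fun ε hε => ?_
      have hk := key (I / (2 * ε)) (by positivity)
      rw [← hJz] at hk
      have : (I / (I / (2 * ε)) + I / (2 * ε) * 0) / 2 = ε := by
        field_simp
        ring
      rw [this] at hk
      linarith
    · have ha : 0 < Real.sqrt I / Real.sqrt J := by positivity
      have hk := key _ ha
      have h1 : I / (Real.sqrt I / Real.sqrt J) = Real.sqrt I * Real.sqrt J := by
        rw [div_div_eq_mul_div, mul_div_right_comm, Real.div_sqrt]
      have h2 : Real.sqrt I / Real.sqrt J * J = Real.sqrt I * Real.sqrt J := by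
        have h : Real.sqrt I / Real.sqrt J * J = Real.sqrt I * (J / Real.sqrt J) := by
          ring
        rw [h, Real.div_sqrt]
      rw [h1, h2] at hk
      rw [Real.sqrt_mul hI0]
      linarith

lemma schwartz_absmul_integrable (f g : SchwartzMap ℝ ℝ) (k : ℕ) :
    Integrable (fun x : ℝ => (1 + x ^ 2) ^ k * |f x * g x|) := by
  have hint : Integrable (fun x : ℝ =>
      ((1 + x ^ 2) ^ k * f x ^ 2 + (1 + x ^ 2) ^ k * g x ^ 2) / 2) :=
    ((schwartz_sq_integrable f k).add (schwartz_sq_integrable g k)).div_const 2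
  refine Integrable.mono' hint ?_ (ae_of_all _ fun x => ?_)
  · exact (((continuous_const.add (continuous_pow 2)).pow k).mul
      ((f.continuous.mul g.continuous).abs)).aestronglyMeasurable
  · have hp : (0:ℝ) ≤ (1 + x ^ 2) ^ k := by positivity
    have hfg : |f x * g x| ≤ (f x ^ 2 + g x ^ 2) / 2 := by
      rw [abs_mul]
      nlinarith [sq_nonneg (|f x| - |g x|), sq_abs (f x), sq_abs (g x),
        abs_nonneg (f x), abs_nonneg (g x)]
    rw [Real.norm_eq_abs, abs_of_nonneg (by positivity)]
    nlinarith [abs_nonneg (f x * g x)]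

lemma schwartz_iterated_deriv (v : SchwartzMap ℝ ℝ) (m : ℕ) :
    ∃ u : SchwartzMap ℝ ℝ, ⇑u = iteratedDeriv m ⇑v := by
  induction m with
  | zero => exact ⟨v, by simp [iteratedDeriv_zero]⟩
  | succ n ih =>
      obtain ⟨u, hu⟩ := ih
      refine ⟨SchwartzMap.derivCLM ℝ ℝ u, ?_⟩
      funext x
      rw [SchwartzMap.derivCLM_apply, iteratedDeriv_succ, hu]

set_option maxHeartbeats 1000000 in
theorem stmt3 (v : SchwartzMap ℝ ℝ) (s m : ℕ) (hs : 1 ≤ s) :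
    (⨆ x : ℝ, |x ^ s * iteratedDeriv m (v : ℝ → ℝ) x|) ^ 2
      ≤ 2 * (s : ℝ) * (∫ x : ℝ, (1 + x ^ 2) ^ s * (iteratedDeriv m (v : ℝ → ℝ) x) ^ 2)
        + Real.sqrt ((∫ x : ℝ, (1 + x ^ 2) ^ s * (iteratedDeriv m (v : ℝ → ℝ) x) ^ 2)
            * (∫ x : ℝ, (1 + x ^ 2) ^ s * (iteratedDeriv (m + 1) (v : ℝ → ℝ) x) ^ 2)) := by
  obtain ⟨u, hu⟩ := schwartz_iterated_deriv v m
  obtain ⟨u', hu'⟩ := schwartz_iterated_deriv v (m + 1)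
  rw [← hu, ← hu']
  have hder : (⇑u' : ℝ → ℝ) = deriv ⇑u := by
    rw [hu', hu, iteratedDeriv_succ]
  set I := ∫ x : ℝ, (1 + x ^ 2) ^ s * u x ^ 2 with hIdef
  set J := ∫ x : ℝ, (1 + x ^ 2) ^ s * u' x ^ 2 with hJdef
  have hI0 : 0 ≤ I := integral_nonneg fun x => by positivity
  have hJ0 : 0 ≤ J := integral_nonneg fun x => by positivity
  have hIint : Integrable (fun x : ℝ => (1 + x ^ 2) ^ s * u x ^ 2) :=
    schwartz_sq_integrable u s
  have hJint : Integrable (fun x : ℝ => (1 + x ^ 2) ^ s * u' x ^ 2) :=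
    schwartz_sq_integrable u' s
  -- Cauchy-Schwarz: K := ∫ (1+x²)^s |u u'| ≤ √(I J)
  set K := ∫ x : ℝ, (1 + x ^ 2) ^ s * |u x * u' x| with hKdef
  have hKint : Integrable (fun x : ℝ => (1 + x ^ 2) ^ s * |u x * u' x|) :=
    schwartz_absmul_integrable u u' s
  have hK : K ≤ Real.sqrt (I * J) := by
    set F : ℝ → ℝ := fun x => Real.sqrt ((1 + x ^ 2) ^ s) * u x with hF
    set G : ℝ → ℝ := fun x => Real.sqrt ((1 + x ^ 2) ^ s) * u' x with hG
    have hFsq : ∀ x : ℝ, F x ^ 2 = (1 + x ^ 2) ^ s * u x ^ 2 := fun x => by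
      rw [hF, mul_pow, Real.sq_sqrt (by positivity)]
    have hGsq : ∀ x : ℝ, G x ^ 2 = (1 + x ^ 2) ^ s * u' x ^ 2 := fun x => by
      rw [hG, mul_pow, Real.sq_sqrt (by positivity)]
    have hFG : ∀ x : ℝ, |F x * G x| = (1 + x ^ 2) ^ s * |u x * u' x| := fun x => by
      have h0 : (0:ℝ) ≤ Real.sqrt ((1 + x ^ 2) ^ s) := Real.sqrt_nonneg _
      have : F x * G x = (Real.sqrt ((1 + x ^ 2) ^ s) * Real.sqrt ((1 + x ^ 2) ^ s))
          * (u x * u' x) := by rw [hF, hG]; ring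
      rw [Real.mul_self_sqrt (show (0:ℝ) ≤ (1 + x ^ 2) ^ s by positivity)] at this
      rw [this, abs_mul, abs_of_nonneg (show (0:ℝ) ≤ (1 + x ^ 2) ^ s by positivity)]
    have h1 : Integrable (fun x => F x ^ 2) := by
      simp_rw [hFsq]; exact hIint
    have h2 : Integrable (fun x => G x ^ 2) := by
      simp_rw [hGsq]; exact hJint
    have h3 : Integrable (fun x => |F x * G x|) := by
      simp_rw [hFG]; exact hKint
    have := my_cs h1 h2 h3
    simp_rw [hFG, hFsq, hGsq] at this
    exact this
  -- the derivative setup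
  set w : ℝ → ℝ := fun x => x ^ s * u x with hw
  set d : ℝ → ℝ := fun x => (s : ℝ) * x ^ (s - 1) * u x + x ^ s * deriv u x with hd
  set g : ℝ → ℝ := fun x => 2 * w x * d x with hg
  have hwderiv : ∀ x : ℝ, HasDerivAt w (d x) x := fun x =>
    (hasDerivAt_pow s x).mul (u.differentiableAt.hasDerivAt)
  have hWderiv : ∀ x : ℝ, HasDerivAt (fun y => w y ^ 2) (g x) x := by
    intro x
    have := (hwderiv x).fun_pow 2
    simpa [hg, mul_comm, mul_assoc, mul_left_comm] using this
  -- pointwise bound on |g|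
  have habs1 : ∀ x : ℝ, |x| ^ s * |x| ^ (s - 1) ≤ (1 + x ^ 2) ^ s := by
    intro x
    rw [← pow_add]
    have hone : (1:ℝ) ≤ 1 + x ^ 2 := by nlinarith [sq_nonneg x]
    rcases le_total |x| 1 with h | h
    · calc |x| ^ (s + (s - 1)) ≤ 1 := pow_le_one₀ (abs_nonneg x) h
        _ ≤ (1 + x ^ 2) ^ s := one_le_pow₀ hone
    · calc |x| ^ (s + (s - 1)) ≤ |x| ^ (2 * s) :=
            pow_le_pow_right₀ h (by omega)
        _ = (x ^ 2) ^ s := by rw [pow_mul, sq_abs]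
        _ ≤ (1 + x ^ 2) ^ s := pow_le_pow_left₀ (sq_nonneg x) (by linarith) s
  have habs2 : ∀ x : ℝ, |x| ^ s * |x| ^ s ≤ (1 + x ^ 2) ^ s := by
    intro x
    rw [← pow_add, ← two_mul, pow_mul, sq_abs]
    exact pow_le_pow_left₀ (sq_nonneg x) (by nlinarith [sq_nonneg x]) s
  have hgbound : ∀ x : ℝ, |g x| ≤
      2 * (s : ℝ) * ((1 + x ^ 2) ^ s * u x ^ 2) + 2 * ((1 + x ^ 2) ^ s * |u x * u' x|) := by
    intro x
    have hx1 := habs1 x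
    have hx2 := habs2 x
    have hderx : deriv (⇑u) x = u' x := by rw [hder]
    have : g x = 2 * ((s:ℝ) * (x ^ s * x ^ (s-1)) * (u x * u x) + (x ^ s * x ^ s) * (u x * u' x)) := by
      simp only [hg, hw, hd]; rw [hderx]; ring
    rw [this]
    have e1 : |x ^ s * x ^ (s-1)| = |x| ^ s * |x| ^ (s-1) := by
      rw [abs_mul, abs_pow, abs_pow]
    have e2 : |x ^ s * x ^ s| = |x| ^ s * |x| ^ s := by
      rw [abs_mul, abs_pow]
    have e3 : u x * u x = u x ^ 2 := (sq (u x)).symm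
    calc |2 * ((s:ℝ) * (x ^ s * x ^ (s-1)) * (u x * u x) + (x ^ s * x ^ s) * (u x * u' x))|
        ≤ 2 * ((s:ℝ) * (|x| ^ s * |x| ^ (s-1)) * (u x ^ 2) + (|x| ^ s * |x| ^ s) * |u x * u' x|) := by
          rw [abs_mul, abs_of_nonneg (by norm_num : (0:ℝ) ≤ 2)]
          gcongr 2 * ?_
          refine (abs_add_le _ _).trans ?_
          gcongr ?_ + ?_
          · rw [abs_mul, abs_mul, Nat.abs_cast, e1, e3, abs_of_nonneg (sq_nonneg (u x))]
          · rw [abs_mul, e2]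
      _ ≤ 2 * (s : ℝ) * ((1 + x ^ 2) ^ s * u x ^ 2) + 2 * ((1 + x ^ 2) ^ s * |u x * u' x|) := by
          have hu2 : (0:ℝ) ≤ u x ^ 2 := sq_nonneg _
          have huu : (0:ℝ) ≤ |u x * u' x| := abs_nonneg _
          have hs0 : (0:ℝ) ≤ (s:ℝ) := Nat.cast_nonneg s
          nlinarith [mul_le_mul_of_nonneg_right hx1 hu2, mul_le_mul_of_nonneg_right hx2 huu]
  -- integrability of g
  set h : ℝ → ℝ := fun x =>
      2 * (s : ℝ) * ((1 + x ^ 2) ^ s * u x ^ 2) + 2 * ((1 + x ^ 2) ^ s * |u x * u' x|) with hh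
  have hhint : Integrable h := (hIint.const_mul (2 * (s:ℝ))).add (hKint.const_mul 2)
  have hdeq : d = fun x => (s : ℝ) * x ^ (s - 1) * u x + x ^ s * u' x := by
    funext x; simp only [hd]; rw [← hder]
  have hdcont : Continuous d := by
    rw [hdeq]
    exact ((continuous_const.mul (continuous_pow _)).mul u.continuous).add
      ((continuous_pow s).mul u'.continuous)
  have hwcont : Continuous w := (continuous_pow s).mul u.continuous
  have hgcont : Continuous g := (continuous_const.mul hwcont).mul hdcont
  have hgint : Integrable g :=
    Integrable.mono' hhint hgcont.aestronglyMeasurable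
      (ae_of_all _ fun x => by rw [Real.norm_eq_abs]; exact hgbound x)
  -- decay of w^2 at infinity
  obtain ⟨C, hC0, hCb⟩ := schwartz_sq_bound u (s + 1)
  have hWb : ∀ x : ℝ, w x ^ 2 * (1 + x ^ 2) ≤ C := by
    intro x
    have h1 : w x ^ 2 = (|x| ^ s * |x| ^ s) * u x ^ 2 := by
      simp only [hw]; rw [mul_pow, ← sq_abs (x ^ s), abs_pow, sq]
    rw [h1]
    have hx2 := habs2 x
    have hu2 : (0:ℝ) ≤ u x ^ 2 * (1 + x ^ 2) := by positivity
    calc |x| ^ s * |x| ^ s * u x ^ 2 * (1 + x ^ 2)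
        ≤ (1 + x ^ 2) ^ s * u x ^ 2 * (1 + x ^ 2) := by nlinarith
      _ = (1 + x ^ 2) ^ (s + 1) * u x ^ 2 := by ring
      _ ≤ C := hCb x
  have hWb' : ∀ x : ℝ, w x ^ 2 ≤ C * (1 + x ^ 2)⁻¹ := by
    intro x
    rw [show C * (1 + x ^ 2)⁻¹ = C / (1 + x ^ 2) by ring,
      le_div_iff₀ (by positivity : (0:ℝ) < 1 + x ^ 2)]
    exact hWb x
  have hdenom_top : Tendsto (fun x : ℝ => 1 + x ^ 2) atTop atTop :=
    tendsto_atTop_add_const_left _ 1 (tendsto_pow_atTop (by norm_num))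
  have hdenom_bot : Tendsto (fun x : ℝ => 1 + x ^ 2) atBot atTop := by
    refine tendsto_atTop_add_const_left _ 1 ?_
    have h1 : Tendsto (fun x : ℝ => x ^ 2) atTop atTop := tendsto_pow_atTop (by norm_num)
    have := h1.comp tendsto_abs_atBot_atTop
    simpa [Function.comp_def, sq_abs] using this
  have hbound_top : Tendsto (fun x : ℝ => C * (1 + x ^ 2)⁻¹) atTop (𝓝 0) := by
    have := (hdenom_top.inv_tendsto_atTop).const_mul C
    simpa using this
  have hbound_bot : Tendsto (fun x : ℝ => C * (1 + x ^ 2)⁻¹) atBot (𝓝 0) := by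
    have := (hdenom_bot.inv_tendsto_atTop).const_mul C
    simpa using this
  have hWtop : Tendsto (fun x => w x ^ 2) atTop (𝓝 0) :=
    tendsto_of_tendsto_of_tendsto_of_le_of_le tendsto_const_nhds hbound_top
      (fun x => sq_nonneg (w x)) (fun x => hWb' x)
  have hWbot : Tendsto (fun x => w x ^ 2) atBot (𝓝 0) :=
    tendsto_of_tendsto_of_tendsto_of_le_of_le tendsto_const_nhds hbound_bot
      (fun x => sq_nonneg (w x)) (fun x => hWb' x)
  -- FTC and the key pointwise estimate
  have hkey : ∀ x₀ : ℝ, w x₀ ^ 2 ≤ (s : ℝ) * I + Real.sqrt (I * J) := by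
    intro x₀
    have h1 : ∫ x in Iic x₀, g x = w x₀ ^ 2 - 0 :=
      integral_Iic_of_hasDerivAt_of_tendsto' (fun x _ => hWderiv x)
        hgint.integrableOn hWbot
    have h2 : ∫ x in Ioi x₀, g x = 0 - w x₀ ^ 2 :=
      integral_Ioi_of_hasDerivAt_of_tendsto' (fun x _ => hWderiv x)
        hgint.integrableOn hWtop
    have h3 : ∫ x in Iic x₀, g x ≤ ∫ x in Iic x₀, |g x| :=
      setIntegral_mono hgint.integrableOn hgint.abs.integrableOn fun x => le_abs_self _
    have h4 : -∫ x in Ioi x₀, g x ≤ ∫ x in Ioi x₀, |g x| := by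
      rw [← integral_neg]
      exact setIntegral_mono hgint.neg.integrableOn hgint.abs.integrableOn
        fun x => neg_le_abs _
    have h5 : (∫ x in Iic x₀, |g x|) + (∫ x in Ioi x₀, |g x|) = ∫ x : ℝ, |g x| := by
      have := integral_add_compl (measurableSet_Iic : MeasurableSet (Iic x₀)) hgint.abs
      rwa [compl_Iic] at this
    have h6 : (∫ x : ℝ, |g x|) ≤ 2 * (s:ℝ) * I + 2 * K := by
      calc (∫ x : ℝ, |g x|) ≤ ∫ x : ℝ, h x := integral_mono hgint.abs hhint hgbound
        _ = 2 * (s:ℝ) * I + 2 * K := by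
            simp only [hh]
            rw [integral_add (hIint.const_mul _) (hKint.const_mul _),
              integral_const_mul, integral_const_mul]
    linarith
  -- wrap up the supremum
  have hIle : (s : ℝ) * I ≤ 2 * (s:ℝ) * I := by
    nlinarith [hI0, (Nat.cast_nonneg s : (0:ℝ) ≤ (s:ℝ))]
  have hCnn : 0 ≤ 2 * (s:ℝ) * I + Real.sqrt (I * J) :=
    add_nonneg (mul_nonneg (by positivity) hI0) (Real.sqrt_nonneg _)
  have hpt : ∀ x : ℝ, |x ^ s * u x| ≤ Real.sqrt (2 * (s:ℝ) * I + Real.sqrt (I * J)) := by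
    intro x
    have h' : w x ^ 2 ≤ 2 * (s:ℝ) * I + Real.sqrt (I * J) := by
      have := hkey x; linarith
    calc |x ^ s * u x| = Real.sqrt ((x ^ s * u x) ^ 2) := (Real.sqrt_sq_eq_abs _).symm
      _ ≤ Real.sqrt (2 * (s:ℝ) * I + Real.sqrt (I * J)) := Real.sqrt_le_sqrt h'
  have hbdd : BddAbove (Set.range fun x : ℝ => |x ^ s * u x|) :=
    ⟨_, by rintro _ ⟨x, rfl⟩; exact hpt x⟩
  have h0 : 0 ≤ ⨆ x : ℝ, |x ^ s * u x| :=
    le_trans (abs_nonneg _) (le_ciSup hbdd 0)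
  have hle : (⨆ x : ℝ, |x ^ s * u x|) ≤ Real.sqrt (2 * (s:ℝ) * I + Real.sqrt (I * J)) :=
    ciSup_le hpt
  calc (⨆ x : ℝ, |x ^ s * u x|) ^ 2
      ≤ Real.sqrt (2 * (s:ℝ) * I + Real.sqrt (I * J)) ^ 2 := pow_le_pow_left₀ h0 hle 2
    _ = 2 * (s:ℝ) * I + Real.sqrt (I * J) := Real.sq_sqrt hCnn
end

section
/- Let α > 0, let β be a real number, and let m ≥ 1 be an integer. Then for every real z > 0, the m-th derivative of the function z ↦ z^{β-1} E_{α,β}(z^α) equals z^{β-m-1} E_{α,β-m}(z^α). -/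
/-- The two-parameter Mittag-Leffler function (real version)
`E_{α,β}(z) = ∑ₖ zᵏ / Γ(αk + β)`, with the convention that a summand vanishes at
the poles of `Γ` (Mathlib's `Real.Gamma` is `0` there, and division by `0` is `0`). -/
noncomputable def mittagLefflerR (α β : ℝ) (z : ℝ) : ℝ :=
  ∑' k : ℕ, z ^ k / Real.Gamma (α * k + β)

open Filter Real Set

/-- Gamma recurrence rewritten with the 0-at-poles convention. -/
lemma gammaRec (x : ℝ) : (x - 1) / Real.Gamma x = 1 / Real.Gamma (x - 1) := by
  rcases eq_or_ne x 1 with rfl | hx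
  · simp [Real.Gamma_zero]
  · have hx1 : x - 1 ≠ 0 := sub_ne_zero.mpr hx
    have h : Real.Gamma x = (x - 1) * Real.Gamma (x - 1) := by
      have := Real.Gamma_add_one (s := x - 1) hx1
      simpa using this
    rw [h, div_mul_eq_div_div, div_self hx1]

/-- Eventually `r ^ x ≤ Γ x`. -/
lemma ev_rpow_le_gamma (r : ℝ) (hr : 1 ≤ r) :
    ∀ᶠ x : ℝ in atTop, r ^ x ≤ Real.Gamma x := by
  have h0 : Tendsto (fun n : ℕ => (r ^ 2) ^ n / Nat.factorial n) atTop (nhds 0) :=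
    (Real.summable_pow_div_factorial (r ^ 2)).tendsto_atTop_zero
  have h1 : ∀ᶠ n : ℕ in atTop, (r ^ 2) ^ n / Nat.factorial n < 1 :=
    h0.eventually_lt_const one_pos
  obtain ⟨N, hN⟩ := eventually_atTop.1 h1
  filter_upwards [eventually_ge_atTop ((N : ℝ) + 3), eventually_ge_atTop (3 : ℝ)]
    with x hxN hx3
  set n : ℕ := ⌊x⌋₊ with hn
  have hn3 : 3 ≤ n := Nat.le_floor hx3
  have hnN : N + 2 ≤ n := Nat.le_floor (by push_cast; linarith)
  have hxn : (n : ℝ) ≤ x := Nat.floor_le (by linarith)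
  have hxn1 : x ≤ (n : ℝ) + 1 := (Nat.lt_floor_add_one x).le
  set m : ℕ := n - 1 with hm
  have hmn : n = m + 1 := (Nat.succ_pred_eq_of_pos (by omega)).symm
  have hfac : (r ^ 2) ^ m ≤ (Nat.factorial m : ℝ) := by
    have h2 := hN m (by omega)
    have hfpos : (0 : ℝ) < Nat.factorial m := by exact_mod_cast Nat.factorial_pos m
    rw [div_lt_one hfpos] at h2
    exact h2.le
  have step1 : r ^ x ≤ r ^ ((n : ℝ) + 1) :=
    Real.rpow_le_rpow_of_exponent_le hr hxn1
  have step2 : r ^ ((n : ℝ) + 1) = r ^ (m + 2 : ℕ) := by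
    rw [← Real.rpow_natCast r (m + 2)]
    congr 1
    push_cast [hmn]
    ring
  have step3 : r ^ (m + 2 : ℕ) ≤ (r ^ 2) ^ m := by
    rw [← pow_mul]
    exact pow_le_pow_right₀ hr (by omega)
  have step4 : (Nat.factorial m : ℝ) = Real.Gamma n := by
    rw [hmn]
    exact_mod_cast (Real.Gamma_nat_eq_factorial m).symm
  have step5 : Real.Gamma n ≤ Real.Gamma x := by
    apply Real.Gamma_strictMonoOn_Ici.monotoneOn _ _ hxn
    · simp only [mem_Ici]; exact_mod_cast by omega
    · exact mem_Ici.2 (by linarith)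
  calc r ^ x ≤ r ^ (m + 2 : ℕ) := step2 ▸ step1
    _ ≤ (r ^ 2) ^ m := step3
    _ ≤ (Nat.factorial m : ℝ) := hfac
    _ = Real.Gamma n := step4
    _ ≤ Real.Gamma x := step5

/-- Summability of `xᵏ / |Γ(αk+c)|`. -/
lemma summable_ml_abs (α : ℝ) (hα : 0 < α) (c x : ℝ) (hx : 0 ≤ x) :
    Summable (fun k : ℕ => x ^ k / |Real.Gamma (α * k + c)|) := by
  set r : ℝ := max 1 ((2 * x + 1) ^ (1 / α)) with hrdef
  have hr1 : 1 ≤ r := le_max_left _ _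
  have hrpos : (0 : ℝ) < r := lt_of_lt_of_le one_pos hr1
  have hrpow : 2 * x + 1 ≤ r ^ α := by
    have hb : (0 : ℝ) ≤ (2 * x + 1) ^ (1 / α) := Real.rpow_nonneg (by linarith) _
    have h1 : ((2 * x + 1) ^ (1 / α)) ^ α ≤ r ^ α :=
      Real.rpow_le_rpow hb (le_max_right _ _) hα.le
    have h2 : ((2 * x + 1) ^ (1 / α)) ^ α = 2 * x + 1 := by
      rw [← Real.rpow_mul (by linarith), one_div, inv_mul_cancel₀ hα.ne']
      simp
    linarith
  have htend : Tendsto (fun k : ℕ => α * k + c) atTop atTop :=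
    tendsto_atTop_add_const_right _ c (tendsto_natCast_atTop_atTop.const_mul_atTop hα)
  have hev : ∀ᶠ k : ℕ in atTop, r ^ (α * k + c) ≤ Real.Gamma (α * k + c) :=
    htend.eventually (ev_rpow_le_gamma r hr1)
  have hsum : Summable (fun k : ℕ => (1 / r ^ c) * (x / (2 * x + 1)) ^ k) := by
    apply Summable.mul_left
    apply summable_geometric_of_lt_one (by positivity)
    rw [div_lt_one (by linarith)]
    linarith
  apply Summable.of_norm_bounded_eventually_nat hsum
  filter_upwards [hev] with k hk
  have hGpos : 0 < Real.Gamma (α * k + c) :=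
    lt_of_lt_of_le (Real.rpow_pos_of_pos hrpos _) hk
  have hbound : r ^ (α * k + c) = (r ^ α) ^ k * r ^ c := by
    rw [Real.rpow_add hrpos, ← Real.rpow_natCast (r ^ α) k, ← Real.rpow_mul hrpos.le]
  have hrc : (0 : ℝ) < r ^ c := Real.rpow_pos_of_pos hrpos c
  have hDle : (2 * x + 1) ^ k * r ^ c ≤ Real.Gamma (α * k + c) := by
    refine le_trans ?_ (hbound ▸ hk)
    exact mul_le_mul_of_nonneg_right
      (pow_le_pow_left₀ (by linarith) hrpow k) hrc.le
  have hD : (0 : ℝ) < (2 * x + 1) ^ k * r ^ c := by positivity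
  have hnn : (0 : ℝ) ≤ x ^ k / |Real.Gamma (α * k + c)| := by positivity
  rw [Real.norm_eq_abs, abs_of_nonneg hnn, abs_of_pos hGpos]
  calc x ^ k / Real.Gamma (α * k + c)
      ≤ x ^ k / ((2 * x + 1) ^ k * r ^ c) :=
        div_le_div_of_nonneg_left (by positivity) hD hDle
    _ = (1 / r ^ c) * (x / (2 * x + 1)) ^ k := by
        rw [div_pow, one_div, ← div_div, div_eq_mul_inv (x ^ k) _, mul_comm]
        rw [div_eq_mul_inv, mul_comm]

/-- The basic rewriting of `t^(c-1) E(t^α)` as a single power series in `t`. -/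
lemma ml_tsum_eq (α c t : ℝ) (ht : 0 < t) :
    t ^ (c - 1) * mittagLefflerR α c (t ^ α)
      = ∑' k : ℕ, t ^ (α * k + c - 1) / Real.Gamma (α * k + c) := by
  rw [mittagLefflerR, ← tsum_mul_left]
  congr 1
  ext k
  rw [mul_div_assoc']
  congr 1
  rw [← Real.rpow_natCast (t ^ α) k, ← Real.rpow_mul ht.le, ← Real.rpow_add ht]
  ring_nf

lemma summable_F (α : ℝ) (hα : 0 < α) (c t : ℝ) (ht : 0 < t) :
    Summable (fun k : ℕ => t ^ (α * k + c - 1) / Real.Gamma (α * k + c)) := by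
  apply Summable.of_abs
  have hsum := (summable_ml_abs α hα c (t ^ α) (Real.rpow_nonneg ht.le α)).mul_left
    (t ^ (c - 1))
  apply Summable.of_nonneg_of_le (fun k => abs_nonneg _) _ hsum
  intro k
  rw [abs_div]
  have h1 : |t ^ (α * k + c - 1)| = t ^ (c - 1) * (t ^ α) ^ k := by
    rw [abs_of_pos (Real.rpow_pos_of_pos ht _), ← Real.rpow_natCast (t ^ α) k,
      ← Real.rpow_mul ht.le, ← Real.rpow_add ht]
    ring_nf
  rw [h1, mul_div_assoc]

/-- The key derivative step. -/
lemma ml_hasDerivAt (α : ℝ) (hα : 0 < α) (c z : ℝ) (hz : 0 < z) :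
    HasDerivAt (fun t : ℝ => t ^ (c - 1) * mittagLefflerR α c (t ^ α))
      (z ^ (c - 2) * mittagLefflerR α (c - 1) (z ^ α)) z := by
  have hz2 : 0 < z / 2 := by linarith
  have hzs : z ∈ Ioo (z / 2) (2 * z) := ⟨by linarith, by linarith⟩
  have hts : ∀ t ∈ Ioo (z / 2) (2 * z), 0 < t := fun t htt => lt_trans hz2 htt.1
  set M : ℝ := max ((z / 2) ^ (c - 2)) ((2 * z) ^ (c - 2)) with hM
  have hMnn : 0 ≤ M := le_trans (Real.rpow_pos_of_pos hz2 _).le (le_max_left _ _)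
  have hu_sum : Summable (fun k : ℕ =>
      M * (((2 * z) ^ α) ^ k / |Real.Gamma (α * k + (c - 1))|)) :=
    (summable_ml_abs α hα (c - 1) ((2 * z) ^ α)
      (Real.rpow_nonneg (by linarith) α)).mul_left M
  have hderiv : ∀ (k : ℕ), ∀ t ∈ Ioo (z / 2) (2 * z),
      HasDerivAt (fun u : ℝ => u ^ (α * k + c - 1) / Real.Gamma (α * k + c))
        (t ^ (α * k + (c - 1) - 1) / Real.Gamma (α * k + (c - 1))) t := by
    intro k t htt
    have ht : 0 < t := hts t htt
    have h := (Real.hasDerivAt_rpow_const (p := α * k + c - 1) (Or.inl ht.ne')).div_const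
      (Real.Gamma (α * k + c))
    refine h.congr_deriv (Eq.symm ?_)
    have e1 : α * k + (c - 1) - 1 = α * k + c - 1 - 1 := by ring
    have e2 : α * k + (c - 1) = (α * k + c) - 1 := by ring
    rw [e1, e2]
    calc t ^ (α * k + c - 1 - 1) / Real.Gamma (α * k + c - 1)
        = t ^ (α * k + c - 1 - 1) * (1 / Real.Gamma (α * k + c - 1)) := by
          rw [mul_one_div]
      _ = t ^ (α * k + c - 1 - 1) * ((α * k + c - 1) / Real.Gamma (α * k + c)) := by
          rw [gammaRec]
      _ = (α * k + c - 1) * t ^ (α * k + c - 1 - 1) / Real.Gamma (α * k + c) := by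
          ring
  have hbound : ∀ (k : ℕ), ∀ t ∈ Ioo (z / 2) (2 * z),
      ‖t ^ (α * k + (c - 1) - 1) / Real.Gamma (α * k + (c - 1))‖
        ≤ M * (((2 * z) ^ α) ^ k / |Real.Gamma (α * k + (c - 1))|) := by
    intro k t htt
    have ht : 0 < t := hts t htt
    have h1 : t ^ (α * k + (c - 1) - 1) = t ^ (α * (k : ℝ)) * t ^ (c - 2) := by
      rw [← Real.rpow_add ht]; ring_nf
    have h2 : t ^ (α * (k : ℝ)) ≤ ((2 * z) ^ α) ^ k := by
      rw [← Real.rpow_natCast ((2 * z) ^ α) k, ← Real.rpow_mul (by linarith)]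
      exact Real.rpow_le_rpow ht.le htt.2.le (by positivity)
    have h3 : t ^ (c - 2) ≤ M := by
      rcases le_or_gt 0 (c - 2) with h | h
      · exact le_trans (Real.rpow_le_rpow ht.le htt.2.le h) (le_max_right _ _)
      · exact le_trans (Real.rpow_le_rpow_of_nonpos hz2 htt.1.le h.le) (le_max_left _ _)
    rw [Real.norm_eq_abs, abs_div, abs_of_pos (Real.rpow_pos_of_pos ht _)]
    calc t ^ (α * k + (c - 1) - 1) / |Real.Gamma (α * k + (c - 1))|
        = t ^ (α * (k : ℝ)) * t ^ (c - 2) / |Real.Gamma (α * k + (c - 1))| := by rw [h1]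
      _ ≤ ((2 * z) ^ α) ^ k * M / |Real.Gamma (α * k + (c - 1))| := by
          rw [div_eq_mul_inv, div_eq_mul_inv]
          exact mul_le_mul_of_nonneg_right
            (mul_le_mul h2 h3 (Real.rpow_pos_of_pos ht _).le (by positivity))
            (by positivity)
      _ = M * (((2 * z) ^ α) ^ k / |Real.Gamma (α * k + (c - 1))|) := by ring
  have hmain : HasDerivAt
      (fun t : ℝ => ∑' k : ℕ, t ^ (α * k + c - 1) / Real.Gamma (α * k + c))
      (∑' k : ℕ, z ^ (α * k + (c - 1) - 1) / Real.Gamma (α * k + (c - 1))) z :=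
    hasDerivAt_tsum_of_isPreconnected hu_sum isOpen_Ioo
      isPreconnected_Ioo hderiv hbound hzs (summable_F α hα c z hz) hzs
  have heq : (fun t : ℝ => t ^ (c - 1) * mittagLefflerR α c (t ^ α))
      =ᶠ[nhds z] (fun t : ℝ => ∑' k : ℕ, t ^ (α * k + c - 1) / Real.Gamma (α * k + c)) := by
    filter_upwards [Ioi_mem_nhds hz] with t ht
    exact ml_tsum_eq α c t ht
  have hval : (∑' k : ℕ, z ^ (α * k + (c - 1) - 1) / Real.Gamma (α * k + (c - 1)))
      = z ^ (c - 2) * mittagLefflerR α (c - 1) (z ^ α) := by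
    rw [show c - 2 = c - 1 - 1 by ring, ml_tsum_eq α (c - 1) z hz]
  rw [← hval]
  exact hmain.congr_of_eventuallyEq heq

theorem stmt7 (α β : ℝ) (hα : 0 < α) (m : ℕ) (hm : 1 ≤ m) (z : ℝ) (hz : 0 < z) :
    iteratedDeriv m (fun t : ℝ => t ^ (β - 1) * mittagLefflerR α β (t ^ α)) z
      = z ^ (β - (m : ℝ) - 1) * mittagLefflerR α (β - m) (z ^ α) := by
  clear hm
  induction m generalizing z with
  | zero => norm_num [iteratedDeriv_zero]
  | succ n ih =>
    rw [iteratedDeriv_succ]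
    have heq : iteratedDeriv n (fun t : ℝ => t ^ (β - 1) * mittagLefflerR α β (t ^ α))
        =ᶠ[nhds z] (fun t : ℝ => t ^ (β - (n : ℝ) - 1) * mittagLefflerR α (β - n) (t ^ α)) := by
      filter_upwards [Ioi_mem_nhds hz] with t ht
      exact ih t ht
    rw [heq.deriv_eq]
    have key := ml_hasDerivAt α hα (β - n) z hz
    push_cast
    rw [show β - ((n : ℝ) + 1) - 1 = (β - n) - 2 from by ring,
      show β - ((n : ℝ) + 1) = (β - n) - 1 from by ring]
    exact key.deriv
end

section
/- Let m, k, N be positive integers with 2mk ≤ N and let M > 0. Then for every ε > 0 there exists a constant M_ε > 0 (depending on m, k, M, N and ε) such that every function u in the Schwartz space S(ℝ) with ∫_ℝ (u^{(N)}(x))² dx ≤ M satisfies ∫_ℝ x^{2m} (u^{(k)}(x))² dx ≤ M_ε + ε·∫_ℝ x^{2m+2} u(x)² dx. -/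
open MeasureTheory Filter Set Topology

noncomputable section

namespace Stmt11Aux

/-- iterated derivative as a Schwartz map -/
def SD : ℕ → SchwartzMap ℝ ℝ → SchwartzMap ℝ ℝ
  | 0, u => u
  | (q+1), u => SchwartzMap.derivCLM ℝ ℝ (SD q u)

lemma SD_coe (q : ℕ) (u : SchwartzMap ℝ ℝ) : ⇑(SD q u) = iteratedDeriv q (⇑u) := by
  induction q with
  | zero => simp [SD]
  | succ q ih =>
    ext x
    rw [iteratedDeriv_succ, ← ih]
    exact SchwartzMap.derivCLM_apply ℝ (SD q u) x

lemma exists_bound (p q r : ℕ) (u : SchwartzMap ℝ ℝ) :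
    ∃ C : ℝ, 0 ≤ C ∧ ∀ x : ℝ,
      (1 + x ^ 2) * |x ^ p * iteratedDeriv q (⇑u) x * iteratedDeriv r (⇑u) x| ≤ C := by
  obtain ⟨C₁, hC₁pos, hC₁⟩ := (SD q u).decay p 0
  obtain ⟨C₂, hC₂pos, hC₂⟩ := (SD q u).decay (p + 2) 0
  obtain ⟨C₃, hC₃pos, hC₃⟩ := (SD r u).decay 0 0
  refine ⟨(C₁ + C₂) * C₃, ?_, ?_⟩
  · have h1 := hC₁ 0
    have h2 := hC₂ 0
    simp only [norm_iteratedFDeriv_zero] at h1 h2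
    positivity
  · intro x
    have h1 := hC₁ x
    have h2 := hC₂ x
    have h3 := hC₃ x
    simp only [norm_iteratedFDeriv_zero, Real.norm_eq_abs, pow_zero, one_mul, SD_coe] at h1 h2 h3
    have e1 : (1 + x ^ 2) * |x ^ p * iteratedDeriv q (⇑u) x * iteratedDeriv r (⇑u) x|
        = (|x| ^ p * |iteratedDeriv q (⇑u) x| + |x| ^ (p+2) * |iteratedDeriv q (⇑u) x|) *
          |iteratedDeriv r (⇑u) x| := by
      rw [abs_mul, abs_mul, abs_pow, ← sq_abs x]
      ring
    rw [e1]
    have hr : |iteratedDeriv r (⇑u) x| ≤ C₃ := h3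
    have h4 : |x| ^ p * |iteratedDeriv q (⇑u) x| + |x| ^ (p+2) * |iteratedDeriv q (⇑u) x|
        ≤ C₁ + C₂ := add_le_add h1 h2
    have h5 : (0:ℝ) ≤ |x| ^ p * |iteratedDeriv q (⇑u) x| + |x| ^ (p+2) * |iteratedDeriv q (⇑u) x| := by
      positivity
    exact mul_le_mul h4 hr (abs_nonneg _) (by nlinarith)

lemma cont_xdd (p q r : ℕ) (u : SchwartzMap ℝ ℝ) :
    Continuous (fun x : ℝ => x ^ p * iteratedDeriv q (⇑u) x * iteratedDeriv r (⇑u) x) := by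
  have h1 : Continuous (iteratedDeriv q (⇑u)) := by rw [← SD_coe]; exact (SD q u).continuous
  have h2 : Continuous (iteratedDeriv r (⇑u)) := by rw [← SD_coe]; exact (SD r u).continuous
  continuity

lemma integrable_xdd (p q r : ℕ) (u : SchwartzMap ℝ ℝ) :
    Integrable (fun x : ℝ => x ^ p * iteratedDeriv q (⇑u) x * iteratedDeriv r (⇑u) x) := by
  obtain ⟨C, hC0, hC⟩ := exists_bound p q r u
  refine (integrable_inv_one_add_sq.const_mul C).mono'
    ((cont_xdd p q r u).aestronglyMeasurable) ?_
  refine Filter.Eventually.of_forall (fun x => ?_)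
  have h := hC x
  have hx : (0:ℝ) < 1 + x ^ 2 := by positivity
  rw [Real.norm_eq_abs]
  rw [mul_comm] at h
  calc |x ^ p * iteratedDeriv q (⇑u) x * iteratedDeriv r (⇑u) x|
      ≤ C / (1 + x ^ 2) := by
        rw [le_div_iff₀ hx]; exact h
    _ = C * (1 + x ^ 2)⁻¹ := by rw [div_eq_mul_inv]

lemma tendsto_xdd (p q r : ℕ) (u : SchwartzMap ℝ ℝ) (l : Filter ℝ)
    (hl : Tendsto (fun x : ℝ => x ^ 2) l atTop) :
    Tendsto (fun x : ℝ => x ^ p * iteratedDeriv q (⇑u) x * iteratedDeriv r (⇑u) x) l (𝓝 0) := by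
  obtain ⟨C, hC0, hC⟩ := exists_bound p q r u
  have hg : Tendsto (fun x : ℝ => C / (1 + x ^ 2)) l (𝓝 0) := by
    have h2 : Tendsto (fun x : ℝ => 1 + x ^ 2) l atTop := tendsto_atTop_add_const_left _ _ hl
    exact Tendsto.div_atTop tendsto_const_nhds h2
  refine squeeze_zero_norm (fun x => ?_) hg
  have h := hC x
  have hx : (0:ℝ) < 1 + x ^ 2 := by positivity
  rw [Real.norm_eq_abs, le_div_iff₀ hx, mul_comm]
  exact h


lemma hasDerivAt_xd (p q : ℕ) (u : SchwartzMap ℝ ℝ) (x : ℝ) :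
    HasDerivAt (fun y : ℝ => y ^ p * iteratedDeriv q (⇑u) y)
      ((p : ℝ) * x ^ (p - 1) * iteratedDeriv q (⇑u) x + x ^ p * iteratedDeriv (q+1) (⇑u) x) x := by
  have hd : HasDerivAt (iteratedDeriv q (⇑u)) (iteratedDeriv (q+1) (⇑u) x) x := by
    have hdiff : Differentiable ℝ (iteratedDeriv q (⇑u)) := by
      rw [← SD_coe]; exact (SD q u).differentiable
    have := (hdiff x).hasDerivAt
    rwa [iteratedDeriv_succ]
  exact (hasDerivAt_pow p x).mul hd

lemma integral_deriv_eq_zero (f f' : ℝ → ℝ) (hd : ∀ x, HasDerivAt f (f' x) x)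
    (hi : Integrable f') (ht : Tendsto f atTop (𝓝 0)) (hb : Tendsto f atBot (𝓝 0)) :
    ∫ x : ℝ, f' x = 0 := by
  have h1 : ∫ x in Iic (0:ℝ), f' x = f 0 - 0 :=
    integral_Iic_of_hasDerivAt_of_tendsto' (fun x _ => hd x) hi.integrableOn hb
  have h2 : ∫ x in Ioi (0:ℝ), f' x = 0 - f 0 :=
    integral_Ioi_of_hasDerivAt_of_tendsto' (fun x _ => hd x) hi.integrableOn ht
  have h3 := integral_add_compl (measurableSet_Iic (a := (0:ℝ))) hi
  rw [compl_Iic] at h3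
  rw [← h3, h1, h2]
  ring

/-- The basic integral quantity. -/
def TT (u : SchwartzMap ℝ ℝ) (p q r : ℕ) : ℝ :=
  ∫ x : ℝ, x ^ p * iteratedDeriv q (⇑u) x * iteratedDeriv r (⇑u) x

lemma TT_step (u : SchwartzMap ℝ ℝ) (p q r : ℕ) :
    TT u p q (r+1) = -((p : ℝ) * TT u (p-1) q r) - TT u p (q+1) r := by
  have i1 := integrable_xdd (p-1) q r u
  have i2 := integrable_xdd p (q+1) r u
  have i3 := integrable_xdd p q (r+1) u
  have hderiv : ∀ x : ℝ,
      HasDerivAt (fun y => y ^ p * iteratedDeriv q (⇑u) y * iteratedDeriv r (⇑u) y)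
      ((p:ℝ) * (x ^ (p-1) * iteratedDeriv q (⇑u) x * iteratedDeriv r (⇑u) x)
        + x ^ p * iteratedDeriv (q+1) (⇑u) x * iteratedDeriv r (⇑u) x
        + x ^ p * iteratedDeriv q (⇑u) x * iteratedDeriv (r+1) (⇑u) x) x := by
    intro x
    have hdr : HasDerivAt (iteratedDeriv r (⇑u)) (iteratedDeriv (r+1) (⇑u) x) x := by
      have hdiff : Differentiable ℝ (iteratedDeriv r (⇑u)) := by
        rw [← SD_coe]; exact (SD r u).differentiable
      have h := (hdiff x).hasDerivAt
      rw [iteratedDeriv_succ]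
      exact h
    have h1 := (hasDerivAt_xd p q u x).mul hdr
    exact h1.congr_deriv (by ring)
  have htop : Tendsto (fun x : ℝ => x ^ p * iteratedDeriv q (⇑u) x * iteratedDeriv r (⇑u) x)
      atTop (𝓝 0) := tendsto_xdd p q r u atTop (tendsto_pow_atTop (by norm_num))
  have hsq : Tendsto (fun x : ℝ => x ^ 2) atBot atTop := by
    have h2 : Tendsto (fun x : ℝ => |x| ^ 2) atBot atTop :=
      (tendsto_pow_atTop (by norm_num)).comp tendsto_abs_atBot_atTop
    convert h2 using 1
    funext x
    rw [sq_abs]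
  have hbot : Tendsto (fun x : ℝ => x ^ p * iteratedDeriv q (⇑u) x * iteratedDeriv r (⇑u) x)
      atBot (𝓝 0) := tendsto_xdd p q r u atBot hsq
  have key := integral_deriv_eq_zero _ _ hderiv (((i1.const_mul (p:ℝ)).add i2).add i3) htop hbot
  have i12 : Integrable (fun x : ℝ => (p:ℝ) * (x ^ (p-1) * iteratedDeriv q (⇑u) x * iteratedDeriv r (⇑u) x)
      + x ^ p * iteratedDeriv (q+1) (⇑u) x * iteratedDeriv r (⇑u) x) :=
    (i1.const_mul (p:ℝ)).add i2
  rw [integral_add i12 i3, integral_add (i1.const_mul (p:ℝ)) i2, MeasureTheory.integral_const_mul] at key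
  unfold TT
  linarith [key]


/-- Weighted square integrals. -/
def JJ (u : SchwartzMap ℝ ℝ) (a b : ℕ) : ℝ :=
  ∫ x : ℝ, x ^ (2*a) * (iteratedDeriv b (⇑u) x) ^ 2

lemma JJ_eq_TT (u : SchwartzMap ℝ ℝ) (a b : ℕ) : JJ u a b = TT u (2*a) b b := by
  unfold JJ TT
  congr 1
  funext x
  ring

lemma JJ_nonneg (u : SchwartzMap ℝ ℝ) (a b : ℕ) : 0 ≤ JJ u a b := by
  refine integral_nonneg (fun x => ?_)
  dsimp only
  have : x ^ (2*a) = (x^a)^2 := by rw [← pow_mul, mul_comm]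
  rw [this]
  positivity

lemma integrable_JJ (u : SchwartzMap ℝ ℝ) (a b : ℕ) :
    Integrable (fun x : ℝ => x ^ (2*a) * (iteratedDeriv b (⇑u) x) ^ 2) :=
  (integrable_xdd (2*a) b b u).congr (Filter.Eventually.of_forall (fun x => by ring))

/-- pointwise Cauchy-Schwarz with parameter -/
lemma abs_mul_le_param (a b s : ℝ) (hs : 0 < s) : |a * b| ≤ a^2/(4*s) + s*b^2 := by
  have h4s : (0:ℝ) < 4*s := by linarith
  have key : |a*b| * (4*s) ≤ a^2 + 4*s^2*b^2 := by
    rcases abs_cases (a*b) with ⟨h,_⟩|⟨h,_⟩ <;> rw [h] <;>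
      nlinarith [sq_nonneg (a-2*s*b), sq_nonneg (a+2*s*b)]
  have := (div_le_div_iff_of_pos_right h4s).mpr key
  rw [mul_div_assoc, div_self (ne_of_gt h4s), mul_one] at this
  calc |a*b| ≤ (a^2 + 4*s^2*b^2)/(4*s) := this
    _ = a^2/(4*s) + s*b^2 := by field_simp

lemma sq_le_mul_of_forall (Z A B : ℝ) (hZ : 0 ≤ Z) (hA : 0 ≤ A) (hB : 0 ≤ B)
    (h : ∀ t : ℝ, 0 < t → Z ≤ (t*A + B/t)/2) : Z^2 ≤ A*B := by
  rcases eq_or_lt_of_le hA with hA0 | hApos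
  · -- A = 0
    have hZ0 : Z ≤ 0 := by
      by_contra hc
      push_neg at hc
      have ht : (0:ℝ) < (B+1)/Z := by positivity
      have := h _ ht
      rw [← hA0] at this
      have e : ((B+1)/Z * 0 + B/((B+1)/Z))/2 = B*Z/(B+1)/2 := by
        field_simp
        ring
      rw [e, div_div, le_div_iff₀ (by positivity)] at this
      nlinarith
    have : Z = 0 := le_antisymm hZ0 hZ
    rw [this, ← hA0]
    simp [mul_nonneg, hB]
  · rcases eq_or_lt_of_le hB with hB0 | hBpos
    · have hZ0 : Z ≤ 0 := by
        by_contra hc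
        push_neg at hc
        have ht : (0:ℝ) < Z/(2*A) := by positivity
        have := h _ ht
        rw [← hB0] at this
        have e : ((Z/(2*A))*A + 0/(Z/(2*A)))/2 = Z/4 := by
          field_simp
          ring
        rw [e] at this
        linarith
      have : Z = 0 := le_antisymm hZ0 hZ
      rw [this, ← hB0]
      simp [mul_nonneg hA]
    · set t := Real.sqrt (B/A) with hts
      have htpos : 0 < t := Real.sqrt_pos.mpr (by positivity)
      have hA' : (0:ℝ) < Real.sqrt A := Real.sqrt_pos.mpr hApos
      have hB' : (0:ℝ) < Real.sqrt B := Real.sqrt_pos.mpr hBpos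
      have hA2 : Real.sqrt A * Real.sqrt A = A := Real.mul_self_sqrt hA
      have hB2 : Real.sqrt B * Real.sqrt B = B := Real.mul_self_sqrt hB
      have e : (t*A + B/t)/2 = Real.sqrt A * Real.sqrt B := by
        rw [hts, Real.sqrt_div hB A]
        field_simp
        linear_combination (A - 2*√A*√A)*hB2 + (-B)*hA2
      have hle := h t htpos
      rw [e] at hle
      calc Z^2 ≤ (Real.sqrt A * Real.sqrt B)^2 := by
            apply pow_le_pow_left₀ hZ hle
        _ = A * B := by
            rw [mul_pow, Real.sq_sqrt hA, Real.sq_sqrt hB]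


lemma logconvex {c : ℕ → ℝ} (h0 : ∀ j, 0 ≤ c j)
    (h : ∀ j, 1 ≤ j → c j ^ 2 ≤ c (j-1) * c (j+1)) :
    ∀ K j, j ≤ K → c j ^ K ≤ c 0 ^ (K - j) * c K ^ j := by
  intro K
  induction K with
  | zero =>
    intro j hj
    interval_cases j
    simp
  | succ K IH =>
    have edge : c K ^ (K+1) ≤ c 0 * c (K+1) ^ K := by
      rcases Nat.eq_zero_or_pos K with rfl | hK
      · simp
      · have h1 := h K hK
        have h2 := IH (K-1) (by omega)
        have e1 : K - (K-1) = 1 := by omega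
        rw [e1, pow_one] at h2
        have h3 : c K ^ (2*K) ≤ (c 0 * c K ^ (K-1)) * c (K+1) ^ K := by
          have e : c K ^ (2*K) = (c K ^ 2)^K := by rw [← pow_mul]
          rw [e]
          calc (c K ^ 2)^K ≤ (c (K-1) * c (K+1))^K :=
                pow_le_pow_left₀ (sq_nonneg _) h1 K
            _ = c (K-1)^K * c (K+1)^K := mul_pow _ _ _
            _ ≤ (c 0 * c K ^ (K-1)) * c (K+1)^K :=
                mul_le_mul_of_nonneg_right h2 (pow_nonneg (h0 _) _)
        rcases eq_or_lt_of_le (h0 K) with hcK | hcK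
        · rw [← hcK, zero_pow (by omega)]
          exact mul_nonneg (h0 0) (pow_nonneg (h0 _) _)
        · have e2 : c K ^ (2*K) = c K ^ (K+1) * c K ^ (K-1) := by
            rw [← pow_add]
            congr 1
            omega
          rw [e2] at h3
          have h4 : (c 0 * c K ^ (K-1)) * c (K+1) ^ K = (c 0 * c (K+1)^K) * c K ^ (K-1) := by
            ring
          rw [h4] at h3
          exact le_of_mul_le_mul_right h3 (pow_pos hcK _)
    intro j hj
    rcases Nat.eq_or_lt_of_le hj with rfl | hjK
    · simp
    · have hjK' : j ≤ K := by omega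
      rcases Nat.eq_zero_or_pos K with rfl | hK
      · interval_cases j
        simp
      · have h2 := IH j hjK'
        have eA : (K-j)*(K+1)+j = (K+1-j)*K := by
          obtain ⟨D, rfl⟩ : ∃ D, K = j + D := ⟨K - j, by omega⟩
          have e1 : j + D - j = D := by omega
          have e2 : j + D + 1 - j = D + 1 := by omega
          rw [e1, e2]
          ring
        have key : (c j ^ (K+1))^K ≤ (c 0 ^ (K+1-j) * c (K+1) ^ j)^K := by
          calc (c j ^ (K+1))^K = (c j ^ K)^(K+1) := by
                rw [← pow_mul, ← pow_mul]
                ring_nf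
            _ ≤ (c 0 ^ (K-j) * c K ^ j)^(K+1) :=
                pow_le_pow_left₀ (pow_nonneg (h0 _) _) h2 _
            _ = c 0 ^ ((K-j)*(K+1)) * (c K ^ (K+1))^j := by
                rw [mul_pow, ← pow_mul, ← pow_mul, ← pow_mul]
                rw [Nat.mul_comm j (K+1)]
            _ ≤ c 0 ^ ((K-j)*(K+1)) * (c 0 * c (K+1)^K)^j := by
                refine mul_le_mul_of_nonneg_left ?_ (pow_nonneg (h0 _) _)
                exact pow_le_pow_left₀ (pow_nonneg (h0 _) _) edge _
            _ = (c 0 ^ (K+1-j) * c (K+1) ^ j)^K := by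
                rw [mul_pow (c 0) (c (K+1)^K) j, ← pow_mul, ← mul_assoc, ← pow_add,
                  mul_pow, ← pow_mul, ← pow_mul]
                rw [eA, Nat.mul_comm K j]
        have hnn : (0:ℝ) ≤ c 0 ^ (K+1-j) * c (K+1) ^ j :=
          mul_nonneg (pow_nonneg (h0 _) _) (pow_nonneg (h0 _) _)
        exact (pow_le_pow_iff_left₀ (pow_nonneg (h0 _) _) hnn (by omega)).mp key


lemma JJ00_eq (u : SchwartzMap ℝ ℝ) : JJ u 0 0 = ∫ x : ℝ, (u x)^2 := by
  simp [JJ, iteratedDeriv_zero]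

lemma JJa0_eq (u : SchwartzMap ℝ ℝ) (a : ℕ) : JJ u a 0 = ∫ x : ℝ, x^(2*a) * (u x)^2 := by
  simp [JJ, iteratedDeriv_zero]

lemma integrable_xusq (u : SchwartzMap ℝ ℝ) (a : ℕ) :
    Integrable (fun x : ℝ => x^(2*a) * (u x)^2) :=
  (integrable_JJ u a 0).congr (Filter.Eventually.of_forall (fun x => by simp [iteratedDeriv_zero]))

/-- parametric Cauchy-Schwarz for the TT integrals -/
lemma TT_abs_le (u : SchwartzMap ℝ ℝ) (a1 a2 q r : ℕ) (s : ℝ) (hs : 0 < s) :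
    |TT u (a1+a2) q r| ≤ JJ u a1 q / (4*s) + s * JJ u a2 r := by
  have h1 : |TT u (a1+a2) q r|
      ≤ ∫ x : ℝ, |x ^ (a1+a2) * iteratedDeriv q (⇑u) x * iteratedDeriv r (⇑u) x| := by
    unfold TT
    have := norm_integral_le_integral_norm (μ := volume)
        (fun x : ℝ => x ^ (a1+a2) * iteratedDeriv q (⇑u) x * iteratedDeriv r (⇑u) x)
    simpa only [Real.norm_eq_abs] using this
  have h2 : ∀ x : ℝ, |x ^ (a1+a2) * iteratedDeriv q (⇑u) x * iteratedDeriv r (⇑u) x|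
      ≤ x^(2*a1) * (iteratedDeriv q (⇑u) x)^2 / (4*s)
        + s * (x^(2*a2) * (iteratedDeriv r (⇑u) x)^2) := by
    intro x
    have key := abs_mul_le_param (x^a1 * iteratedDeriv q (⇑u) x)
      (x^a2 * iteratedDeriv r (⇑u) x) s hs
    have e1 : x ^ (a1+a2) * iteratedDeriv q (⇑u) x * iteratedDeriv r (⇑u) x
        = (x^a1 * iteratedDeriv q (⇑u) x) * (x^a2 * iteratedDeriv r (⇑u) x) := by
      rw [pow_add]
      ring
    have e2 : (x^a1 * iteratedDeriv q (⇑u) x)^2 = x^(2*a1) * (iteratedDeriv q (⇑u) x)^2 := by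
      rw [mul_pow, ← pow_mul, Nat.mul_comm a1 2]
    have e3 : (x^a2 * iteratedDeriv r (⇑u) x)^2 = x^(2*a2) * (iteratedDeriv r (⇑u) x)^2 := by
      rw [mul_pow, ← pow_mul, Nat.mul_comm a2 2]
    rw [e1]
    rw [e2, e3] at key
    exact key
  have h3 : (∫ x : ℝ, |x ^ (a1+a2) * iteratedDeriv q (⇑u) x * iteratedDeriv r (⇑u) x|)
      ≤ ∫ x : ℝ, (x^(2*a1) * (iteratedDeriv q (⇑u) x)^2 / (4*s)
        + s * (x^(2*a2) * (iteratedDeriv r (⇑u) x)^2)) := by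
    refine integral_mono (integrable_xdd (a1+a2) q r u).abs ?_ h2
    exact ((integrable_JJ u a1 q).div_const (4*s)).add ((integrable_JJ u a2 r).const_mul s)
  have h4 : (∫ x : ℝ, (x^(2*a1) * (iteratedDeriv q (⇑u) x)^2 / (4*s)
        + s * (x^(2*a2) * (iteratedDeriv r (⇑u) x)^2)))
      = JJ u a1 q / (4*s) + s * JJ u a2 r := by
    rw [integral_add ((integrable_JJ u a1 q).div_const (4*s)) ((integrable_JJ u a2 r).const_mul s),
      integral_div, MeasureTheory.integral_const_mul]
    rfl
  linarith

lemma JJ0_logconvex (u : SchwartzMap ℝ ℝ) : ∀ b, 1 ≤ b →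
    (JJ u 0 b)^2 ≤ JJ u 0 (b-1) * JJ u 0 (b+1) := by
  intro b hb
  obtain ⟨b', rfl⟩ : ∃ b', b = b' + 1 := ⟨b - 1, by omega⟩
  have e0 : b' + 1 - 1 = b' := by omega
  rw [e0]
  have step := TT_step u 0 (b'+1) b'
  have eJ : JJ u 0 (b'+1) = TT u 0 (b'+1) (b'+1) := by
    rw [JJ_eq_TT]
  have eJ2 : JJ u 0 (b'+1) = -TT u 0 (b'+2) b' := by
    rw [eJ, step]
    simp
  refine sq_le_mul_of_forall _ _ _ (JJ_nonneg u 0 (b'+1)) (JJ_nonneg u 0 b') (JJ_nonneg u 0 (b'+2))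
    (fun t ht => ?_)
  have hs : (0:ℝ) < t/2 := by linarith
  have h1 := TT_abs_le u 0 0 (b'+2) b' (t/2) hs
  rw [Nat.add_zero 0] at h1
  have h2 : JJ u 0 (b'+1) ≤ |TT u 0 (b'+2) b'| := by
    rw [eJ2]
    exact neg_le_abs _
  have e4 : JJ u 0 (b'+2) / (4*(t/2)) + (t/2) * JJ u 0 b'
      = (t * JJ u 0 b' + JJ u 0 (b'+2) / t)/2 := by
    field_simp
    ring
  rw [e4] at h1
  linarith

lemma Gb_le {N : ℕ} {M : ℝ} (hN : 1 ≤ N) (hM : 0 ≤ M) (u : SchwartzMap ℝ ℝ)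
    {b : ℕ} (hb : b ≤ N) (hu : JJ u 0 N ≤ M) : JJ u 0 b ≤ JJ u 0 0 + M := by
  have hlog := logconvex (c := fun j => JJ u 0 j) (fun j => JJ_nonneg u 0 j)
    (fun j hj => JJ0_logconvex u j hj) N b hb
  have hP : (0:ℝ) ≤ JJ u 0 0 := JJ_nonneg u 0 0
  have hQ : (0:ℝ) ≤ JJ u 0 0 + M := by linarith
  have h1 : JJ u 0 b ^ N ≤ (JJ u 0 0 + M)^(N-b) * (JJ u 0 0 + M)^b := by
    refine le_trans hlog (mul_le_mul ?_ ?_ (pow_nonneg (JJ_nonneg u 0 N) _) (pow_nonneg hQ _))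
    · exact pow_le_pow_left₀ hP (by linarith) _
    · exact pow_le_pow_left₀ (JJ_nonneg u 0 N) (by linarith) _
  rw [← pow_add] at h1
  have e : N - b + b = N := by omega
  rw [e] at h1
  exact (pow_le_pow_iff_left₀ (JJ_nonneg u 0 b) hQ (by omega)).mp h1


/-- The key uniform-boundedness predicate. -/
def Good (m N : ℕ) (M : ℝ) (F : SchwartzMap ℝ ℝ → ℝ) : Prop :=
  ∀ ε : ℝ, 0 < ε → ∃ C : ℝ, 0 < C ∧ ∀ u : SchwartzMap ℝ ℝ,
    JJ u 0 N ≤ M → F u ≤ C + ε * JJ u (m+1) 0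

variable {m N : ℕ} {M : ℝ}

lemma good_of_le {F G : SchwartzMap ℝ ℝ → ℝ}
    (h : ∀ u, JJ u 0 N ≤ M → F u ≤ G u) (hG : Good m N M G) : Good m N M F := by
  intro ε hε
  obtain ⟨C, hC, hCb⟩ := hG ε hε
  exact ⟨C, hC, fun u hu => le_trans (h u hu) (hCb u hu)⟩

lemma good_const (c : ℝ) : Good m N M (fun _ => c) := by
  intro ε hε
  refine ⟨|c| + 1, by positivity, fun u hu => ?_⟩
  have h1 := JJ_nonneg u (m+1) 0
  have h2 := le_abs_self c
  nlinarith

lemma good_add {F G : SchwartzMap ℝ ℝ → ℝ} (hF : Good m N M F) (hG : Good m N M G) :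
    Good m N M (fun u => F u + G u) := by
  intro ε hε
  obtain ⟨C₁, hC₁, hb₁⟩ := hF (ε/2) (by linarith)
  obtain ⟨C₂, hC₂, hb₂⟩ := hG (ε/2) (by linarith)
  refine ⟨C₁ + C₂, by linarith, fun u hu => ?_⟩
  have h1 := hb₁ u hu
  have h2 := hb₂ u hu
  have h3 := JJ_nonneg u (m+1) 0
  show F u + G u ≤ _
  linarith

lemma good_smul {F : SchwartzMap ℝ ℝ → ℝ} (c : ℝ) (hc : 0 ≤ c) (hF : Good m N M F) :
    Good m N M (fun u => c * F u) := by
  intro ε hε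
  obtain ⟨C, hC, hb⟩ := hF (ε/(c+1)) (by positivity)
  refine ⟨c * C + 1, by positivity, fun u hu => ?_⟩
  have h1 := hb u hu
  have h2 := JJ_nonneg u (m+1) 0
  have h3 : c * F u ≤ c * (C + ε/(c+1) * JJ u (m+1) 0) :=
    mul_le_mul_of_nonneg_left h1 hc
  have h4 : c * (ε/(c+1)) ≤ ε := by
    rw [mul_div_assoc', div_le_iff₀ (by positivity : (0:ℝ) < c+1)]
    nlinarith
  have h5 : c * (ε/(c+1)) * JJ u (m+1) 0 ≤ ε * JJ u (m+1) 0 :=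
    mul_le_mul_of_nonneg_right h4 h2
  show c * F u ≤ _
  nlinarith

lemma good_absorb {F A B : SchwartzMap ℝ ℝ → ℝ} (hA : Good m N M A) (hB : Good m N M B)
    (h : ∀ t : ℝ, 0 < t → ∀ u, JJ u 0 N ≤ M →
      F u ≤ t * (A u + JJ u (m+1) 0) + B u / t) : Good m N M F := by
  intro ε hε
  have hcomb : Good m N M (fun u => (ε/2) * A u + (2/ε) * B u) :=
    good_add (good_smul _ (by linarith) hA) (good_smul _ (by positivity) hB)
  obtain ⟨C, hC, hb⟩ := hcomb (ε/2) (by linarith)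
  refine ⟨C, hC, fun u hu => ?_⟩
  have h1 := h (ε/2) (by linarith) u hu
  have h2 := hb u hu
  have e : B u / (ε/2) = (2/ε) * B u := by
    field_simp
  rw [e] at h1
  linarith


lemma integrable_usq (u : SchwartzMap ℝ ℝ) : Integrable (fun x : ℝ => (u x)^2) :=
  (integrable_JJ u 0 0).congr (Filter.Eventually.of_forall (fun x => by
    simp [iteratedDeriv_zero]))

lemma usq_le (u : SchwartzMap ℝ ℝ) (x : ℝ) (s : ℝ) (hs : 0 < s) :
    (u x)^2 ≤ s * JJ u 0 0 + JJ u 0 1 / s := by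
  have hdu : ∀ y : ℝ, HasDerivAt (⇑u) (iteratedDeriv 1 (⇑u) y) y := by
    intro y
    rw [iteratedDeriv_one]
    exact (u.differentiable y).hasDerivAt
  have hd : ∀ y : ℝ, HasDerivAt (fun z => (u z)^2)
      (iteratedDeriv 1 (⇑u) y * u y + u y * iteratedDeriv 1 (⇑u) y) y := by
    intro y
    have := (hdu y).mul (hdu y)
    simp only [pow_two]
    exact this
  have hint : Integrable (fun y : ℝ => iteratedDeriv 1 (⇑u) y * u y + u y * iteratedDeriv 1 (⇑u) y) := by
    have h1 := integrable_xdd 0 1 0 u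
    have h2 := integrable_xdd 0 0 1 u
    have := h1.add h2
    refine this.congr (Filter.Eventually.of_forall (fun y => ?_))
    simp [iteratedDeriv_zero]
  have htend : Tendsto (fun y : ℝ => (u y)^2) atTop (𝓝 0) := by
    have h := tendsto_xdd 0 0 0 u atTop (tendsto_pow_atTop (by norm_num))
    refine h.congr (fun y => ?_)
    simp [iteratedDeriv_zero]
    ring
  have key := integral_Ioi_of_hasDerivAt_of_tendsto' (a := x) (fun y _ => hd y)
    hint.integrableOn htend
  have h2 : (u x)^2 ≤ ∫ y in Ioi x, |iteratedDeriv 1 (⇑u) y * u y + u y * iteratedDeriv 1 (⇑u) y| := by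
    have e : (u x)^2 = -∫ y in Ioi x, (iteratedDeriv 1 (⇑u) y * u y + u y * iteratedDeriv 1 (⇑u) y) := by
      rw [key]; ring
    rw [e]
    have := norm_integral_le_integral_norm (μ := volume.restrict (Ioi x))
      (fun y => iteratedDeriv 1 (⇑u) y * u y + u y * iteratedDeriv 1 (⇑u) y)
    simp only [Real.norm_eq_abs] at this
    calc -∫ y in Ioi x, (iteratedDeriv 1 (⇑u) y * u y + u y * iteratedDeriv 1 (⇑u) y)
        ≤ |∫ y in Ioi x, (iteratedDeriv 1 (⇑u) y * u y + u y * iteratedDeriv 1 (⇑u) y)| :=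
          neg_le_abs _
      _ ≤ _ := this
  have h3 : (∫ y in Ioi x, |iteratedDeriv 1 (⇑u) y * u y + u y * iteratedDeriv 1 (⇑u) y|)
      ≤ ∫ y : ℝ, |iteratedDeriv 1 (⇑u) y * u y + u y * iteratedDeriv 1 (⇑u) y| :=
    setIntegral_le_integral hint.abs (Filter.Eventually.of_forall (fun y => abs_nonneg _))
  have h4 : (∫ y : ℝ, |iteratedDeriv 1 (⇑u) y * u y + u y * iteratedDeriv 1 (⇑u) y|)
      ≤ ∫ y : ℝ, (s * (u y)^2 + (iteratedDeriv 1 (⇑u) y)^2 / s) := by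
    refine integral_mono hint.abs ?_ (fun y => ?_)
    · exact ((integrable_usq u).const_mul s).add
        (((integrable_JJ u 0 1).congr (Filter.Eventually.of_forall (fun y => by
          simp))).div_const s)
    · have := abs_mul_le_param (iteratedDeriv 1 (⇑u) y) (u y) (s/2) (by linarith)
      have e : |iteratedDeriv 1 (⇑u) y * u y + u y * iteratedDeriv 1 (⇑u) y|
          = 2 * |iteratedDeriv 1 (⇑u) y * u y| := by
        rw [show iteratedDeriv 1 (⇑u) y * u y + u y * iteratedDeriv 1 (⇑u) y
          = 2 * (iteratedDeriv 1 (⇑u) y * u y) from by ring, abs_mul]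
        simp
      rw [e]
      have e2 : 4 * (s/2) = 2 * s := by ring
      rw [e2] at this
      calc 2 * |iteratedDeriv 1 (⇑u) y * u y|
          ≤ 2 * ((iteratedDeriv 1 (⇑u) y)^2/(2*s) + (s/2)*(u y)^2) := by linarith
        _ = s * (u y)^2 + (iteratedDeriv 1 (⇑u) y)^2 / s := by
            field_simp
            ring
  have h5 : (∫ y : ℝ, (s * (u y)^2 + (iteratedDeriv 1 (⇑u) y)^2 / s))
      = s * JJ u 0 0 + JJ u 0 1 / s := by
    rw [integral_add ((integrable_usq u).const_mul s)
      (((integrable_JJ u 0 1).congr (Filter.Eventually.of_forall (fun y => by simp))).div_const s),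
      MeasureTheory.integral_const_mul, integral_div, JJ00_eq]
    congr 2
    simp [JJ]
  linarith

lemma final_absorb (N : ℕ) (Pv Y Xv c e Mv : ℝ) (hP : 0 ≤ Pv) (hY : 0 ≤ Y)
    (hX : 0 ≤ Xv) (hc : 0 < c) (hM : 0 ≤ Mv) (he : 0 ≤ e) (hN : 1 ≤ N)
    (h1 : Pv ≤ c*Y + e*Xv) (h2 : Y^N ≤ Pv^(N-1)*Mv) :
    Pv ≤ (2*c)^N * Mv + 2*e*Xv := by
  by_cases hcase : Pv ≤ 2*e*Xv
  · have : (0:ℝ) ≤ (2*c)^N * Mv := by positivity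
    linarith
  · push_neg at hcase
    have hPpos : 0 < Pv := lt_of_le_of_lt (by positivity) hcase
    have h3 : Pv ≤ 2*c*Y := by nlinarith
    have h4 : Pv^N ≤ (2*c)^N * Y^N := by
      rw [← mul_pow]
      exact pow_le_pow_left₀ hP h3 N
    have h5 : Pv^N ≤ ((2*c)^N * Mv) * Pv^(N-1) := by
      calc Pv^N ≤ (2*c)^N * (Pv^(N-1)*Mv) :=
            le_trans h4 (mul_le_mul_of_nonneg_left h2 (by positivity))
        _ = ((2*c)^N * Mv) * Pv^(N-1) := by ring
    have h6 : Pv^N = Pv * Pv^(N-1) := by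
      rw [← pow_succ']
      congr 1
      omega
    rw [h6] at h5
    have h7 := le_of_mul_le_mul_right h5 (pow_pos hPpos (N-1))
    nlinarith


lemma good_P (hN : 1 ≤ N) (hM : 0 < M) : Good m N M (fun u => JJ u 0 0) := by
  intro ε hε
  set R : ℝ := max 1 (4/ε) with hR
  have hR1 : (1:ℝ) ≤ R := le_max_left _ _
  have hR0 : (0:ℝ) < R := lt_of_lt_of_le one_pos hR1
  have hRe1 : R ≤ R^(2*(m+1)) := le_self_pow₀ hR1 (by positivity)
  have hRe : 4/ε ≤ R^(2*(m+1)) := le_trans (le_max_right _ _) hRe1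
  have hRepos : (0:ℝ) < R^(2*(m+1)) := by positivity
  refine ⟨(44*R^2)^N * M + 1, by positivity, fun u hu => ?_⟩
  show JJ u 0 0 ≤ _
  set Pv := JJ u 0 0 with hPv
  set Xv := JJ u (m+1) 0 with hXv
  set Y := JJ u 0 1 with hY
  have hPnn : 0 ≤ Pv := JJ_nonneg u 0 0
  have hXnn : 0 ≤ Xv := JJ_nonneg u (m+1) 0
  have hYnn : 0 ≤ Y := JJ_nonneg u 0 1
  have hs : (0:ℝ) < 1/(8*R) := by positivity
  -- split the integral
  have hsplit : Pv = (∫ x in Icc (-R) R, (u x)^2) + ∫ x in (Icc (-R) R)ᶜ, (u x)^2 := by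
    rw [hPv, JJ00_eq]
    exact (integral_add_compl measurableSet_Icc (integrable_usq u)).symm
  -- middle part
  have hmid : (∫ x in Icc (-R) R, (u x)^2) ≤ (2*R) * ((1/(8*R)) * Pv + Y / (1/(8*R))) := by
    have h1 : (∫ x in Icc (-R) R, (u x)^2)
        ≤ ∫ _x in Icc (-R) R, ((1/(8*R)) * Pv + Y/(1/(8*R))) := by
      refine setIntegral_mono_on ((integrable_usq u).integrableOn)
        (integrableOn_const ?_) measurableSet_Icc
        (fun x _ => usq_le u x _ hs)
      rw [Real.volume_Icc]
      exact ENNReal.ofReal_ne_top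
    rw [setIntegral_const, Real.volume_real_Icc_of_le (by linarith), smul_eq_mul] at h1
    calc (∫ x in Icc (-R) R, (u x)^2) ≤ (R - -R) * ((1/(8*R)) * Pv + Y/(1/(8*R))) := h1
      _ = (2*R) * ((1/(8*R)) * Pv + Y / (1/(8*R))) := by ring_nf
  -- tail part
  have htail : (∫ x in (Icc (-R) R)ᶜ, (u x)^2) ≤ Xv / R^(2*(m+1)) := by
    have hpt : ∀ x ∈ (Icc (-R) R)ᶜ, (u x)^2 ≤ x^(2*(m+1)) * (u x)^2 / R^(2*(m+1)) := by
      intro x hx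
      simp only [mem_compl_iff, mem_Icc, not_and_or, not_le] at hx
      have habs : R ≤ |x| := by
        rcases hx with hx | hx
        · rw [abs_of_nonpos (by linarith)]; linarith
        · rw [abs_of_pos (by linarith)]; linarith
      have h1 : R^(2*(m+1)) ≤ |x|^(2*(m+1)) := pow_le_pow_left₀ hR0.le habs _
      rw [Even.pow_abs ⟨m+1, by ring⟩] at h1
      rw [le_div_iff₀ hRepos]
      have := mul_le_mul_of_nonneg_left h1 (sq_nonneg (u x))
      calc (u x)^2 * R^(2*(m+1)) = (u x)^2 * R^(2*(m+1)) := rfl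
        _ ≤ (u x)^2 * x^(2*(m+1)) := this
        _ = x^(2*(m+1)) * (u x)^2 := by ring
    have h1 : (∫ x in (Icc (-R) R)ᶜ, (u x)^2)
        ≤ ∫ x in (Icc (-R) R)ᶜ, x^(2*(m+1)) * (u x)^2 / R^(2*(m+1)) := by
      refine setIntegral_mono_on ((integrable_usq u).integrableOn)
        (((integrable_xusq u (m+1)).div_const _).integrableOn) measurableSet_Icc.compl hpt
    have h2 : (∫ x in (Icc (-R) R)ᶜ, x^(2*(m+1)) * (u x)^2 / R^(2*(m+1)))
        ≤ ∫ x : ℝ, x^(2*(m+1)) * (u x)^2 / R^(2*(m+1)) := by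
      refine setIntegral_le_integral ((integrable_xusq u (m+1)).div_const _)
        (Filter.Eventually.of_forall (fun x => ?_))
      have hx2 : (0:ℝ) ≤ x^(2*(m+1)) := by
        rw [show 2*(m+1) = (m+1)*2 from by ring, pow_mul]
        positivity
      positivity
    have h3 : (∫ x : ℝ, x^(2*(m+1)) * (u x)^2 / R^(2*(m+1))) = Xv / R^(2*(m+1)) := by
      rw [integral_div, hXv, JJa0_eq]
    linarith
  -- combine
  have hcomb : Pv ≤ 22*R^2 * Y + (2/R^(2*(m+1))) * Xv := by
    have e3 : (2/R^(2*(m+1)))*Xv = 2*(1/R^(2*(m+1))*Xv) := by ring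
    rw [e3]
    have e1 : (2*R) * ((1/(8*R)) * Pv + Y / (1/(8*R))) = Pv/4 + 16*R^2*Y := by
      field_simp
      ring
    rw [e1] at hmid
    have e2 : Xv / R^(2*(m+1)) = (1/R^(2*(m+1))) * Xv := by ring
    rw [e2] at htail
    have hRXnn : 0 ≤ (1/R^(2*(m+1))) * Xv := by positivity
    have hA : 0 ≤ R^2*Y := mul_nonneg (sq_nonneg R) hYnn
    linarith
  -- interpolation bound for Y
  have hYN : Y^N ≤ Pv^(N-1) * M := by
    have hlog := logconvex (c := fun j => JJ u 0 j) (fun j => JJ_nonneg u 0 j)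
      (fun j hj => JJ0_logconvex u j hj) N 1 hN
    simp only [pow_one] at hlog
    calc Y^N ≤ Pv^(N-1) * JJ u 0 N := hlog
      _ ≤ Pv^(N-1) * M := mul_le_mul_of_nonneg_left hu (pow_nonneg hPnn _)
  have hfin := final_absorb N Pv Y Xv (22*R^2) (2/R^(2*(m+1))) M hPnn hYnn hXnn
    (by positivity) hM.le (by positivity) hN hcomb hYN
  have h4e : 4 ≤ R^(2*(m+1)) * ε := by
    rw [div_le_iff₀ hε] at hRe
    linarith
  have hee : 2 * (2/R^(2*(m+1))) ≤ ε := by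
    rw [show 2*(2/R^(2*(m+1))) = 4/R^(2*(m+1)) from by ring, div_le_iff₀ hRepos, mul_comm]
    exact h4e
  have : 2 * (2/R^(2*(m+1))) * Xv ≤ ε * Xv := mul_le_mul_of_nonneg_right hee hXnn
  calc Pv ≤ (2*(22*R^2))^N * M + 2*(2/R^(2*(m+1)))*Xv := hfin
    _ ≤ (44*R^2)^N * M + 1 + ε * Xv := by
        have e3 : (2*(22*R^2)) = 44*R^2 := by ring
        rw [e3]
        linarith

lemma good_Gb (hN : 1 ≤ N) (hM : 0 < M) {b : ℕ} (hb : b ≤ N) :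
    Good m N M (fun u => JJ u 0 b) := by
  refine good_of_le (G := fun u => JJ u 0 0 + M) (fun u hu => Gb_le hN hM.le u hb hu) ?_
  exact good_add (good_P hN hM) (good_const M)


lemma JJ_weight_le (u : SchwartzMap ℝ ℝ) (a c b : ℕ) (hac : a ≤ c) :
    JJ u a b ≤ JJ u 0 b + JJ u c b := by
  have hpt : ∀ x : ℝ, x^(2*a) * (iteratedDeriv b (⇑u) x)^2
      ≤ x^(2*0) * (iteratedDeriv b (⇑u) x)^2 + x^(2*c) * (iteratedDeriv b (⇑u) x)^2 := by
    intro x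
    have hsq : (0:ℝ) ≤ x^2 := sq_nonneg x
    have h1 : x^(2*a) ≤ x^(2*0) + x^(2*c) := by
      rw [pow_mul, pow_mul, pow_mul]
      simp only [pow_zero]
      by_cases hx : x^2 ≤ 1
      · have := pow_le_one₀ hsq hx (n := a)
        have h2 : (0:ℝ) ≤ (x^2)^c := by positivity
        linarith
      · push_neg at hx
        have := pow_le_pow_right₀ hx.le hac
        have h2 : (0:ℝ) ≤ (1:ℝ) := by norm_num
        linarith
    have := mul_le_mul_of_nonneg_right h1 (sq_nonneg (iteratedDeriv b (⇑u) x))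
    linarith [this]
  have hmono : JJ u a b ≤ ∫ x : ℝ, (x^(2*0) * (iteratedDeriv b (⇑u) x)^2
      + x^(2*c) * (iteratedDeriv b (⇑u) x)^2) :=
    integral_mono (integrable_JJ u a b) ((integrable_JJ u 0 b).add (integrable_JJ u c b)) hpt
  rw [integral_add (integrable_JJ u 0 b) (integrable_JJ u c b)] at hmono
  exact hmono

/-- the doubling weight function -/
def mu (m1 : ℕ) (a : ℕ) : ℕ :=
  if 2*a ≤ m1 ∨ m1 ≤ a then 2 else 2 * mu m1 (2*a - m1)
termination_by a
decreasing_by omega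

lemma mu_ge2 (m1 : ℕ) : ∀ a, 2 ≤ mu m1 a := by
  intro a
  induction a using Nat.strong_induction_on with
  | _ a IH =>
    rw [mu]
    split
    · exact le_refl 2
    · rename_i h
      push_neg at h
      have := IH (2*a - m1) (by omega)
      omega

lemma mu_base {m1 a : ℕ} (h : 2*a ≤ m1 ∨ m1 ≤ a) : mu m1 a = 2 := by
  rw [mu, if_pos h]

lemma mu_rec {m1 a : ℕ} (h1 : m1 < 2*a) (h2 : a < m1) :
    mu m1 a = 2 * mu m1 (2*a - m1) := by
  rw [mu]
  rw [if_neg (by omega)]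

lemma mu_mono (m1 : ℕ) : ∀ a2, a2 < m1 → ∀ a1, a1 ≤ a2 → mu m1 a1 ≤ mu m1 a2 := by
  intro a2
  induction a2 using Nat.strong_induction_on with
  | _ a2 IH =>
    intro ha2 a1 h12
    by_cases hc2 : 2*a2 ≤ m1
    · rw [mu_base (Or.inl hc2), mu_base (Or.inl (by omega))]
    · push_neg at hc2
      rw [mu_rec hc2 ha2]
      by_cases hc1 : 2*a1 ≤ m1
      · rw [mu_base (Or.inl hc1)]
        have := mu_ge2 m1 (2*a2 - m1)
        omega
      · push_neg at hc1
        rw [mu_rec hc1 (by omega)]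
        have := IH (2*a2 - m1) (by omega) (by omega) (2*a1 - m1) (by omega)
        omega

lemma mu_invariant (m : ℕ) : ∀ a, 1 ≤ a → a ≤ m → mu (m+1) a * (m+1-a) ≤ 2*m := by
  intro a
  induction a using Nat.strong_induction_on with
  | _ a IH =>
    intro ha1 ham
    by_cases hc : 2*a ≤ m+1
    · rw [mu_base (Or.inl hc)]
      omega
    · push_neg at hc
      have hrec := mu_rec hc (by omega : a < m+1)
      have hIH := IH (2*a - (m+1)) (by omega) (by omega) (by omega)
      have e : m+1-(2*a - (m+1)) = 2*(m+1-a) := by omega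
      calc mu (m+1) a * (m+1-a) = 2 * mu (m+1) (2*a - (m+1)) * (m+1-a) := by rw [hrec]
        _ = mu (m+1) (2*a - (m+1)) * (2*(m+1-a)) := by ring
        _ = mu (m+1) (2*a - (m+1)) * (m+1-(2*a-(m+1))) := by rw [e]
        _ ≤ 2*m := hIH


theorem main (hm : 1 ≤ m) (hN : 1 ≤ N) (hM : 0 < M) :
    ∀ a, 1 ≤ a → a ≤ m → ∀ d, 1 ≤ d → mu (m+1) a * d ≤ N →
      Good m N M (fun u => JJ u a d) := by
  intro a
  induction a using Nat.strong_induction_on with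
  | _ a IH =>
    intro ha1 ham d hd1 hmuN
    have hmu2 : 2 ≤ mu (m+1) a := mu_ge2 (m+1) a
    have h2dN : 2*d ≤ N := by
      have := Nat.mul_le_mul_right d hmu2
      omega
    have tree : ∀ r α : ℕ, α + r ≤ d →
        Good m N M (fun u => |TT u (2*a - α) (2*d - r - α) r|) := by
      intro r
      induction r with
      | zero =>
        intro α hα
        have hGoodB : Good m N M (fun u => JJ u (2*a - α - (m+1)) (2*d - 0 - α)) := by
          by_cases hc : 2*a - α ≤ m + 1
          · rw [show 2*a - α - (m+1) = 0 from by omega]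
            exact good_Gb hN hM (by omega)
          · push_neg at hc
            have hlt : 2*a - α - (m+1) < a := by omega
            have h2a : m + 1 < 2*a := by omega
            have hrec := mu_rec h2a (by omega : a < m+1)
            have hmono : mu (m+1) (2*a - α - (m+1)) ≤ mu (m+1) (2*a - (m+1)) :=
              mu_mono (m+1) (2*a - (m+1)) (by omega) (2*a - α - (m+1)) (by omega)
            refine IH (2*a - α - (m+1)) hlt (by omega) (by omega) (2*d - 0 - α) (by omega) ?_
            calc mu (m+1) (2*a - α - (m+1)) * (2*d - 0 - α)
                ≤ mu (m+1) (2*a - (m+1)) * (2*d) := by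
                  exact Nat.mul_le_mul hmono (by omega)
              _ = (2 * mu (m+1) (2*a - (m+1))) * d := by ring
              _ = mu (m+1) a * d := by rw [← hrec]
              _ ≤ N := hmuN
        refine good_absorb (A := fun u => JJ u 0 0)
          (B := fun u => JJ u (2*a - α - (m+1)) (2*d - 0 - α) / 4)
          (good_P hN hM) ?_ ?_
        · refine good_of_le (G := fun u => (1/4) * JJ u (2*a - α - (m+1)) (2*d - 0 - α))
            (fun u _ => le_of_eq (by ring)) ?_
          exact good_smul _ (by norm_num) hGoodB
        · intro t ht u hu
          have h1 := TT_abs_le u (2*a - α - (m+1)) (min (2*a - α) (m+1)) (2*d - 0 - α) 0 t ht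
          rw [show (2*a - α - (m+1)) + min (2*a - α) (m+1) = 2*a - α from by omega] at h1
          have h2 : JJ u (min (2*a - α) (m+1)) 0 ≤ JJ u 0 0 + JJ u (m+1) 0 :=
            JJ_weight_le u _ (m+1) 0 (min_le_right _ _)
          have h3 : t * JJ u (min (2*a - α) (m+1)) 0 ≤ t * (JJ u 0 0 + JJ u (m+1) 0) :=
            mul_le_mul_of_nonneg_left h2 ht.le
          have e : JJ u (2*a - α - (m+1)) (2*d - 0 - α) / (4*t)
              = (JJ u (2*a - α - (m+1)) (2*d - 0 - α) / 4) / t := by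
            rw [div_div]
          rw [e] at h1
          linarith
      | succ r ihr =>
        intro α hα
        have g1 := ihr (α+1) (by omega)
        have g2 := ihr α (by omega)
        rw [show 2*a - (α+1) = 2*a - α - 1 from by omega,
          show 2*d - r - (α+1) = 2*d - (r+1) - α from by omega] at g1
        rw [show 2*d - r - α = (2*d - (r+1) - α) + 1 from by omega] at g2
        refine good_of_le
          (G := fun u => ((2*a - α : ℕ) : ℝ) * |TT u (2*a - α - 1) (2*d - (r+1) - α) r|
            + |TT u (2*a - α) ((2*d - (r+1) - α) + 1) r|)
          (fun u _ => ?_) (good_add (good_smul _ (Nat.cast_nonneg _) g1) g2)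
        rw [TT_step u (2*a - α) (2*d - (r+1) - α) r]
        calc |(-(((2*a - α : ℕ):ℝ) * TT u (2*a - α - 1) (2*d - (r+1) - α) r))
              - TT u (2*a - α) ((2*d - (r+1) - α) + 1) r|
            ≤ |(-(((2*a - α : ℕ):ℝ) * TT u (2*a - α - 1) (2*d - (r+1) - α) r))|
              + |TT u (2*a - α) ((2*d - (r+1) - α) + 1) r| := abs_sub _ _
          _ = ((2*a - α : ℕ):ℝ) * |TT u (2*a - α - 1) (2*d - (r+1) - α) r|
              + |TT u (2*a - α) ((2*d - (r+1) - α) + 1) r| := by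
              rw [abs_neg, abs_mul, Nat.abs_cast]
    have hfin := tree d 0 (by omega)
    rw [show 2*a - 0 = 2*a from by omega, show 2*d - d - 0 = d from by omega] at hfin
    refine good_of_le (fun u _ => ?_) hfin
    rw [JJ_eq_TT]
    exact le_abs_self _

end Stmt11Aux

open Stmt11Aux in
theorem stmt11 (m k N : ℕ) (hm : 1 ≤ m) (hk : 1 ≤ k) (hN : 1 ≤ N)
    (hmkN : 2 * m * k ≤ N) (M : ℝ) (hM : 0 < M) :
    ∀ ε > (0:ℝ), ∃ Mε > (0:ℝ), ∀ u : SchwartzMap ℝ ℝ,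
      (∫ x : ℝ, (iteratedDeriv N (u : ℝ → ℝ) x) ^ 2) ≤ M →
      (∫ x : ℝ, x ^ (2 * m) * (iteratedDeriv k (u : ℝ → ℝ) x) ^ 2)
        ≤ Mε + ε * ∫ x : ℝ, x ^ (2 * m + 2) * (u x) ^ 2 := by
  intro ε hε
  have hmu : mu (m+1) m * k ≤ N := by
    have hinv := mu_invariant m m (by omega) (le_refl m)
    rw [show m+1-m = 1 from by omega, Nat.mul_one] at hinv
    calc mu (m+1) m * k ≤ 2*m*k := Nat.mul_le_mul_right k hinv
      _ ≤ N := hmkN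
  obtain ⟨C, hC, hb⟩ := main (M := M) hm hN hM m hm (le_refl m) k hk hmu ε hε
  refine ⟨C, hC, fun u hu => ?_⟩
  have hu' : JJ u 0 N ≤ M := by
    have e : JJ u 0 N = ∫ x : ℝ, (iteratedDeriv N (⇑u) x)^2 := by
      simp [JJ]
    rw [e]
    exact hu
  have hres := hb u hu'
  have e1 : JJ u m k = ∫ x : ℝ, x ^ (2 * m) * (iteratedDeriv k (⇑u) x) ^ 2 := rfl
  have e2 : JJ u (m+1) 0 = ∫ x : ℝ, x ^ (2 * m + 2) * (u x) ^ 2 := by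
    rw [JJa0_eq, show 2*(m+1) = 2*m+2 from by ring]
  simp only [] at hres
  rw [e1, e2] at hres
  exact hres
end
end
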